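/- arXiv:1411.2620 — 8 statements merged into one kernel-verified Lean document; each statement's English description precedes it below -/
import Mathlib

section
/- Let γ > 0, p > 1 and ω > γ²/4, and let φ_ω be as defined. Then φ_ω is even, strictly positive, continuous on ℝ, twice continuously differentiable on ℝ \ {0}, satisfies the ordinary differential equation -φ_ω''(x) + ω φ_ω(x) - φ_ω(x)^p = 0 for every x ≠ 0, has one-sided derivatives at 0 satisfying φ_ω'(0+) - φ_ω'(0-) = -γ φ_ω(0) (equivalently φ_ω'(0+) = -(γ/2) φ_ω(0)), and φ_ω and its derivative belong to L²(ℝ). -/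
open MeasureTheory Set
open scoped ENNReal

noncomputable section

/-- Inverse hyperbolic tangent. -/
def artanh (x : ℝ) : ℝ := Real.log ((1 + x) / (1 - x)) / 2

/-- Squared `L²` norm of `v`. -/
def l2Sq (v : ℝ → ℂ) : ℝ := ∫ x : ℝ, ‖v x‖ ^ 2

/-- Squared `L²` norm of the derivative of `v`. -/
def gradSq (v : ℝ → ℂ) : ℝ := ∫ x : ℝ, ‖deriv v x‖ ^ 2

/-- `∫ |v|^(p+1)`, i.e. `‖v‖_{L^{p+1}}^{p+1}`. -/
def lpPow (p : ℝ) (v : ℝ → ℂ) : ℝ := ∫ x : ℝ, ‖v x‖ ^ (p + 1)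

/-- `v ∈ H¹(ℝ)`, expressed via its continuous representative: `v` is square
integrable, absolutely continuous with a.e. derivative `deriv v`, which is
square integrable. -/
def MemH1 (v : ℝ → ℂ) : Prop :=
  Continuous v ∧ MemLp v 2 volume ∧ MemLp (deriv v) 2 volume ∧
    ∀ x : ℝ, v x = v 0 + ∫ t in (0:ℝ)..x, deriv v t

/-- The energy functional `E`. -/
def En (γ p : ℝ) (v : ℝ → ℂ) : ℝ :=
  gradSq v / 2 - γ / 2 * ‖v 0‖ ^ 2 - lpPow p v / (p + 1)

/-- The Nehari functional `K_ω`. -/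
def Kfun (γ p ω : ℝ) (v : ℝ → ℂ) : ℝ :=
  gradSq v + ω * l2Sq v - γ * ‖v 0‖ ^ 2 - lpPow p v

/-- The virial functional `P`. -/
def Pfun (γ p : ℝ) (v : ℝ → ℂ) : ℝ :=
  gradSq v - γ / 2 * ‖v 0‖ ^ 2 - (p - 1) / (2 * (p + 1)) * lpPow p v

/-- The action functional `S_ω`. -/
def Sfun (γ p ω : ℝ) (v : ℝ → ℂ) : ℝ := En γ p v + ω / 2 * l2Sq v

/-- The minimal action `d(ω)` on the Nehari manifold. -/
def dInf (γ p ω : ℝ) : ℝ :=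
  sInf {s : ℝ | ∃ v : ℝ → ℂ, MemH1 v ∧ v ≠ 0 ∧ Kfun γ p ω v = 0 ∧ s = Sfun γ p ω v}

/-- The explicit standing wave profile `φ_ω`. -/
def phi (γ p ω : ℝ) (x : ℝ) : ℝ :=
  ((p + 1) * ω / 2 *
      (1 / Real.cosh ((p - 1) * Real.sqrt ω / 2 * |x| + artanh (γ / (2 * Real.sqrt ω)))) ^ 2)
    ^ (1 / (p - 1))

/-- `φ_ω` as a complex valued function. -/
def phiC (γ p ω : ℝ) : ℝ → ℂ := fun x => (phi γ p ω x : ℂ)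

/-- The `L²`-invariant scaling `v^λ(x) = λ^{1/2} v(λ x)`. -/
def scale (l : ℝ) (v : ℝ → ℂ) : ℝ → ℂ := fun x => (Real.sqrt l : ℂ) * v (l * x)

/-- The set `𝓑_ω`. -/
def inB (γ p ω : ℝ) (v : ℝ → ℂ) : Prop :=
  MemH1 v ∧ 0 < En γ p v ∧ En γ p v < En γ p (phiC γ p ω) ∧
    l2Sq v = l2Sq (phiC γ p ω) ∧ Pfun γ p v < 0 ∧ Kfun γ p ω v < 0

namespace Stmt0Aux

/-- `k = 2/(p-1)` -/
def kk (p : ℝ) : ℝ := 2 / (p - 1)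
/-- leading constant -/
def cc (p ω : ℝ) : ℝ := ((p + 1) * ω / 2) ^ (1 / (p - 1))
/-- the profile in the moving variable -/
def gg (p ω : ℝ) (y : ℝ) : ℝ := cc p ω * Real.cosh y ^ (-kk p)
def gg1 (p ω : ℝ) (y : ℝ) : ℝ :=
  -kk p * gg p ω y * (Real.sinh y / Real.cosh y)
def gg2 (p ω : ℝ) (y : ℝ) : ℝ :=
  gg p ω y * ((kk p ^ 2 + kk p) * (Real.sinh y / Real.cosh y) ^ 2 - kk p)
def aa (p ω : ℝ) : ℝ := (p - 1) * Real.sqrt ω / 2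
def bb (γ ω : ℝ) : ℝ := artanh (γ / (2 * Real.sqrt ω))

variable {p ω γ : ℝ}

lemma cc_pos (hp : 1 < p) (hω : 0 < ω) : 0 < cc p ω :=
  Real.rpow_pos_of_pos (by nlinarith) _

lemma gg_pos (hp : 1 < p) (hω : 0 < ω) (y : ℝ) : 0 < gg p ω y :=
  mul_pos (cc_pos hp hω) (Real.rpow_pos_of_pos (Real.cosh_pos y) _)

lemma kk_pos (hp : 1 < p) : 0 < kk p := by
  have : 0 < p - 1 := by linarith
  exact div_pos two_pos this

lemma hasDerivAt_gg (y : ℝ) :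
    HasDerivAt (gg p ω) (gg1 p ω y) y := by
  have h := ((Real.hasDerivAt_cosh y).rpow_const
    (p := -kk p) (Or.inl (Real.cosh_pos y).ne')).const_mul (cc p ω)
  refine h.congr_deriv (Eq.symm ?_)
  have hc := (Real.cosh_pos y).ne'
  rw [gg1, gg, Real.rpow_sub (Real.cosh_pos y), Real.rpow_one]
  field_simp

lemma hasDerivAt_T (y : ℝ) :
    HasDerivAt (fun y => Real.sinh y / Real.cosh y)
      (1 - (Real.sinh y / Real.cosh y) ^ 2) y := by
  have h := (Real.hasDerivAt_sinh y).div (Real.hasDerivAt_cosh y) (Real.cosh_pos y).ne'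
  refine h.congr_deriv (Eq.symm ?_)
  have hc := (Real.cosh_pos y).ne'
  have hsq := Real.cosh_sq_sub_sinh_sq y
  field_simp
  all_goals first | (exact Or.inl trivial) | nlinarith [hsq]

lemma hasDerivAt_gg1 (y : ℝ) :
    HasDerivAt (gg1 p ω) (gg2 p ω y) y := by
  have h := (((hasDerivAt_gg (p := p) (ω := ω) y).const_mul (-kk p)).mul (hasDerivAt_T y))
  refine h.congr_deriv (Eq.symm ?_)
  simp only [gg1, gg2]
  ring


lemma sqrt_pos_of (hγ : 0 < γ) (hω : γ ^ 2 / 4 < ω) : 0 < ω :=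
  lt_of_le_of_lt (by positivity) hω

lemma phi_eq (hp : 1 < p) (hω : 0 < ω) (x : ℝ) :
    phi γ p ω x = gg p ω (aa p ω * |x| + bb γ ω) := by
  have hA : (0:ℝ) < (p + 1) * ω / 2 := by nlinarith
  set u := aa p ω * |x| + bb γ ω with hu
  have hcu := Real.cosh_pos u
  have h1 : (1 / Real.cosh u) ^ 2 = Real.cosh u ^ (-2 : ℝ) := by
    rw [one_div, inv_pow, ← Real.rpow_natCast (Real.cosh u) 2, ← Real.rpow_neg hcu.le]
    norm_num
  rw [phi, gg, cc]
  rw [show (p - 1) * Real.sqrt ω / 2 * |x| + artanh (γ / (2 * Real.sqrt ω)) = u from rfl]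
  rw [h1, Real.mul_rpow hA.le (Real.rpow_nonneg hcu.le _), ← Real.rpow_mul hcu.le]
  congr 1
  rw [kk]; ring

lemma gg_rpow_p (hp : 1 < p) (hω : 0 < ω) (y : ℝ) :
    gg p ω y ^ p = (p + 1) * ω / 2 * gg p ω y * Real.cosh y ^ (-2 : ℝ) := by
  have hA : (0:ℝ) < (p + 1) * ω / 2 := by nlinarith
  have hcy := Real.cosh_pos y
  have hp1 : p - 1 ≠ 0 := by linarith
  rw [gg, cc, Real.mul_rpow (Real.rpow_nonneg hA.le _) (Real.rpow_nonneg hcy.le _),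
    ← Real.rpow_mul hA.le, ← Real.rpow_mul hcy.le]
  have e1 : 1 / (p - 1) * p = 1 + 1 / (p - 1) := by field_simp; ring
  have e2 : -kk p * p = -kk p + (-2 : ℝ) := by rw [kk]; field_simp; ring
  rw [e1, e2, Real.rpow_add hA, Real.rpow_add hcy, Real.rpow_one]
  ring

lemma sinh_sq (y : ℝ) : Real.sinh y ^ 2 = Real.cosh y ^ 2 - 1 := by
  nlinarith [Real.cosh_sq_sub_sinh_sq y]

lemma rpow_neg_two (y : ℝ) : Real.cosh y ^ (-2 : ℝ) = (Real.cosh y ^ 2)⁻¹ := by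
  rw [Real.rpow_neg (Real.cosh_pos y).le, show ((2:ℝ) = ((2:ℕ):ℝ)) by norm_num,
    Real.rpow_natCast]

lemma ode_identity (hp : 1 < p) (hω : 0 < ω) (y : ℝ) :
    ω * gg p ω y - gg p ω y ^ p = aa p ω ^ 2 * gg2 p ω y := by
  have hcy := Real.cosh_pos y
  have hp1 : p - 1 ≠ 0 := by linarith
  have hsq : Real.sqrt ω ^ 2 = ω := Real.sq_sqrt hω.le
  rw [gg_rpow_p hp hω, rpow_neg_two, gg2, aa, kk]
  simp only [div_pow]
  rw [sinh_sq]
  set s := Real.sqrt ω with hs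
  rw [← hsq]
  field_simp
  ring


lemma T_artanh {x : ℝ} (h0 : 0 ≤ x) (h1 : x < 1) :
    Real.sinh (artanh x) / Real.cosh (artanh x) = x := by
  have hr : (0:ℝ) < (1 + x) / (1 - x) := by
    apply div_pos <;> linarith
  set y := artanh x with hy
  have hE : Real.exp y ^ 2 = (1 + x) / (1 - x) := by
    rw [hy, artanh, ← Real.exp_nat_mul]
    push_cast
    rw [show (2:ℝ) * (Real.log ((1 + x) / (1 - x)) / 2) = Real.log ((1 + x) / (1 - x)) by ring,
      Real.exp_log hr]
  have hEpos := Real.exp_pos y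
  rw [Real.sinh_eq, Real.cosh_eq, Real.exp_neg]
  have h1x : (1:ℝ) - x ≠ 0 := by linarith
  have hE' : Real.exp y ^ 2 * (1 - x) = 1 + x := by
    rw [hE]; field_simp
  have hden : Real.exp y + (Real.exp y)⁻¹ ≠ 0 := by positivity
  field_simp
  nlinarith [hE', hEpos]

lemma bb_nonneg (hγ : 0 < γ) (hω : γ ^ 2 / 4 < ω) : 0 ≤ bb γ ω := by
  have hω0 : 0 < ω := sqrt_pos_of hγ hω
  have hs : 0 < Real.sqrt ω := Real.sqrt_pos.2 hω0
  have hx : 0 < γ / (2 * Real.sqrt ω) := by positivity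
  have hx1 : γ / (2 * Real.sqrt ω) < 1 := by
    rw [div_lt_one (by positivity)]
    nlinarith [Real.sq_sqrt hω0.le]
  rw [bb, artanh]
  have : (1:ℝ) ≤ (1 + γ / (2 * Real.sqrt ω)) / (1 - γ / (2 * Real.sqrt ω)) := by
    rw [le_div_iff₀ (by linarith)]
    linarith
  have := Real.log_nonneg this
  linarith

lemma xi_lt_one (hγ : 0 < γ) (hω : γ ^ 2 / 4 < ω) : γ / (2 * Real.sqrt ω) < 1 := by
  have hω0 : 0 < ω := sqrt_pos_of hγ hω
  have hs : 0 < Real.sqrt ω := Real.sqrt_pos.2 hω0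
  rw [div_lt_one (by positivity)]
  nlinarith [Real.sq_sqrt hω0.le]

/-- exponential decay bound for `gg` at nonnegative arguments -/
lemma gg_le (hp : 1 < p) (hω : 0 < ω) {y : ℝ} (hy : 0 ≤ y) :
    gg p ω y ≤ cc p ω * 2 ^ kk p * Real.exp (-kk p * y) := by
  have hk := kk_pos hp
  have hc := cc_pos hp hω
  have hcosh : Real.exp y / 2 ≤ Real.cosh y := by
    rw [Real.cosh_eq]
    have := (Real.exp_pos (-y)).le
    linarith
  have hE2 : (0:ℝ) < Real.exp y / 2 := by positivity
  have h1 : Real.cosh y ^ (-kk p) ≤ (Real.exp y / 2) ^ (-kk p) :=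
    Real.rpow_le_rpow_of_nonpos hE2 hcosh (by linarith)
  have h2 : (Real.exp y / 2) ^ (-kk p) = 2 ^ kk p * Real.exp (-kk p * y) := by
    rw [Real.div_rpow (Real.exp_pos y).le (by norm_num : (0:ℝ) ≤ 2),
      ← Real.exp_mul, mul_comm y (-kk p), div_eq_mul_inv,
      ← Real.rpow_neg (by norm_num : (0:ℝ) ≤ 2), neg_neg, mul_comm]
  rw [gg]
  calc cc p ω * Real.cosh y ^ (-kk p) ≤ cc p ω * (Real.exp y / 2) ^ (-kk p) := by
        exact mul_le_mul_of_nonneg_left h1 hc.le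
    _ = cc p ω * 2 ^ kk p * Real.exp (-kk p * y) := by rw [h2]; ring


lemma integrable_exp_neg_abs {t : ℝ} (ht : 0 < t) :
    Integrable fun x : ℝ => Real.exp (-t * |x|) := by
  have hIoi : IntegrableOn (fun x : ℝ => Real.exp (-t * |x|)) (Ioi 0) := by
    refine ((exp_neg_integrableOn_Ioi 0 ht)).congr_fun ?_ measurableSet_Ioi
    intro y hy
    show Real.exp (-t * y) = Real.exp (-t * |y|)
    rw [abs_of_pos hy]
  rw [← integrableOn_univ, ← @Iio_union_Ici _ _ (0 : ℝ), integrableOn_union,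
    integrableOn_Ici_iff_integrableOn_Ioi]
  refine ⟨?_, hIoi⟩
  rw [← (Measure.measurePreserving_neg (volume : Measure ℝ)).integrableOn_comp_preimage
      (Homeomorph.neg ℝ).measurableEmbedding]
  simp only [Function.comp_def, abs_neg, neg_preimage, neg_Iio, neg_zero]
  exact hIoi

lemma memℒp_of_exp_bound {f : ℝ → ℝ} (hm : AEStronglyMeasurable f volume) {C t : ℝ}
    (ht : 0 < t) (hb : ∀ᵐ x : ℝ, |f x| ≤ C * Real.exp (-t * |x|)) :
    MemLp f 2 volume := by
  set g : ℝ → ℝ := fun x => C * Real.exp (-t * |x|) with hg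
  have hgcont : Continuous g :=
    continuous_const.mul (Real.continuous_exp.comp (continuous_const.mul continuous_abs))
  have hg2 : Integrable (fun x => g x ^ 2) volume := by
    have h := (integrable_exp_neg_abs (t := 2 * t) (by linarith)).const_mul (C ^ 2)
    refine h.congr (Filter.Eventually.of_forall fun x => ?_)
    simp only [hg]
    rw [mul_pow, ← Real.exp_nat_mul]
    push_cast
    ring_nf
  have hgmem : MemLp g 2 volume :=
    (memLp_two_iff_integrable_sq hgcont.aestronglyMeasurable).2 hg2
  refine MemLp.of_le hgmem hm ?_
  filter_upwards [hb] with x hx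
  rw [Real.norm_eq_abs, Real.norm_eq_abs]
  exact hx.trans (le_abs_self _)

lemma kk_mul_aa (hp : 1 < p) : kk p * aa p ω = Real.sqrt ω := by
  have hp1 : p - 1 ≠ 0 := by linarith
  rw [kk, aa]
  field_simp

lemma gg_comp_le (hγ : 0 < γ) (hp : 1 < p) (hω : γ ^ 2 / 4 < ω) (x : ℝ) :
    gg p ω (aa p ω * |x| + bb γ ω) ≤
      cc p ω * 2 ^ kk p * Real.exp (-Real.sqrt ω * |x|) := by
  have hω0 : 0 < ω := sqrt_pos_of hγ hω
  have hk := kk_pos hp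
  have hc := cc_pos hp hω0
  have haa : 0 ≤ aa p ω := by
    rw [aa]
    exact div_nonneg (mul_nonneg (by linarith) (Real.sqrt_nonneg ω)) (by norm_num)
  have hb0 := bb_nonneg hγ hω
  have hu : 0 ≤ aa p ω * |x| + bb γ ω := add_nonneg (mul_nonneg haa (abs_nonneg x)) hb0
  refine (gg_le hp hω0 hu).trans ?_
  have h1 : -kk p * (aa p ω * |x| + bb γ ω) ≤ -Real.sqrt ω * |x| := by
    have : kk p * (aa p ω * |x|) = Real.sqrt ω * |x| := by
      rw [← kk_mul_aa (ω := ω) hp]; ring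
    nlinarith [abs_nonneg x]
  have := Real.exp_le_exp.2 h1
  have hcpos : 0 < cc p ω * 2 ^ kk p := mul_pos hc (Real.rpow_pos_of_pos two_pos _)
  calc cc p ω * 2 ^ kk p * Real.exp (-kk p * (aa p ω * |x| + bb γ ω))
      ≤ cc p ω * 2 ^ kk p * Real.exp (-Real.sqrt ω * |x|) := by
        exact mul_le_mul_of_nonneg_left this hcpos.le

lemma abs_gg1_le (hp : 1 < p) (hω : 0 < ω) (y : ℝ) :
    |gg1 p ω y| ≤ kk p * gg p ω y := by
  have hk := kk_pos hp
  have hg := gg_pos hp hω y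
  have hT : |Real.sinh y / Real.cosh y| ≤ 1 := by
    rw [abs_div, abs_of_pos (Real.cosh_pos y), div_le_one (Real.cosh_pos y)]
    have h1 := Real.sinh_lt_cosh (x := y)
    have h2 := Real.sinh_lt_cosh (x := -y)
    rw [Real.sinh_neg, Real.cosh_neg] at h2
    rw [abs_le]
    constructor <;> linarith
  rw [gg1, abs_mul, abs_mul, abs_neg, abs_of_pos hk, abs_of_pos hg]
  calc kk p * gg p ω y * |Real.sinh y / Real.cosh y| ≤ kk p * gg p ω y * 1 :=
        mul_le_mul_of_nonneg_left hT (by positivity)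
    _ = kk p * gg p ω y := mul_one _


lemma hasDerivAt_comp_affine (e x : ℝ) :
    HasDerivAt (fun x => gg p ω (e * x + bb γ ω)) (gg1 p ω (e * x + bb γ ω) * e) x := by
  have haff : HasDerivAt (fun x => e * x + bb γ ω) e x := by
    simpa using ((hasDerivAt_id x).const_mul e).add_const (bb γ ω)
  exact (hasDerivAt_gg _).comp x haff

lemma hasDerivAt_comp_affine1 (e x : ℝ) :
    HasDerivAt (fun x => gg1 p ω (e * x + bb γ ω) * e)
      (gg2 p ω (e * x + bb γ ω) * e * e) x := by
  have haff : HasDerivAt (fun x => e * x + bb γ ω) e x := by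
    simpa using ((hasDerivAt_id x).const_mul e).add_const (bb γ ω)
  exact ((hasDerivAt_gg1 _).comp x haff).mul_const e

lemma phi_eventually_pos (hp : 1 < p) (hω : 0 < ω) {x : ℝ} (hx : 0 < x) :
    phi γ p ω =ᶠ[nhds x] fun x => gg p ω (aa p ω * x + bb γ ω) := by
  filter_upwards [Ioi_mem_nhds hx] with y hy
  rw [phi_eq hp hω, abs_of_pos hy]

lemma phi_eventually_neg (hp : 1 < p) (hω : 0 < ω) {x : ℝ} (hx : x < 0) :
    phi γ p ω =ᶠ[nhds x] fun x => gg p ω (-aa p ω * x + bb γ ω) := by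
  filter_upwards [Iio_mem_nhds hx] with y hy
  rw [phi_eq hp hω, abs_of_neg hy]
  congr 2
  ring

lemma deriv_phi_eq {e x : ℝ}
    (hev : phi γ p ω =ᶠ[nhds x] fun x => gg p ω (e * x + bb γ ω)) :
    deriv (phi γ p ω) x = gg1 p ω (e * x + bb γ ω) * e := by
  rw [Filter.EventuallyEq.deriv_eq hev]
  exact (hasDerivAt_comp_affine _ _).deriv

lemma deriv2_phi_eq {e x : ℝ}
    (hev : phi γ p ω =ᶠ[nhds x] fun x => gg p ω (e * x + bb γ ω)) :
    deriv (deriv (phi γ p ω)) x = gg2 p ω (e * x + bb γ ω) * e * e := by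
  have h1 : deriv (fun x => gg p ω (e * x + bb γ ω))
      = fun x => gg1 p ω (e * x + bb γ ω) * e :=
    funext fun y => (hasDerivAt_comp_affine _ _).deriv
  have h2 : deriv (phi γ p ω) =ᶠ[nhds x] fun x => gg1 p ω (e * x + bb γ ω) * e := by
    have := hev.deriv
    rwa [h1] at this
  rw [Filter.EventuallyEq.deriv_eq h2]
  exact (hasDerivAt_comp_affine1 _ _).deriv

lemma contDiff_gg : ContDiff ℝ 2 (gg p ω) :=
  contDiff_const.mul
    (Real.contDiff_cosh.rpow_const_of_ne fun y => (Real.cosh_pos y).ne')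

end Stmt0Aux

open Stmt0Aux in
/-- basic properties of the explicit standing wave profile `φ_ω`. -/
theorem stmt0 (γ p ω : ℝ) (hγ : 0 < γ) (hp : 1 < p) (hω : γ ^ 2 / 4 < ω) :
    (∀ x : ℝ, phi γ p ω (-x) = phi γ p ω x) ∧
    (∀ x : ℝ, 0 < phi γ p ω x) ∧
    Continuous (phi γ p ω) ∧
    ContDiffOn ℝ 2 (phi γ p ω) {(0:ℝ)}ᶜ ∧
    (∀ x : ℝ, x ≠ 0 →
      -(deriv (deriv (phi γ p ω)) x) + ω * phi γ p ω x - phi γ p ω x ^ p = 0) ∧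
    (∃ dplus dminus : ℝ,
      HasDerivWithinAt (phi γ p ω) dplus (Ici (0:ℝ)) 0 ∧
      HasDerivWithinAt (phi γ p ω) dminus (Iic (0:ℝ)) 0 ∧
      dplus - dminus = -γ * phi γ p ω 0 ∧
      dplus = -(γ / 2) * phi γ p ω 0) ∧
    MemLp (phi γ p ω) 2 volume ∧
    MemLp (deriv (phi γ p ω)) 2 volume := by
  have hω0 : 0 < ω := sqrt_pos_of hγ hω
  have hp1 : (0:ℝ) < p - 1 := by linarith
  have hs : 0 < Real.sqrt ω := Real.sqrt_pos.2 hω0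
  have haa : 0 < aa p ω := by
    rw [aa]; exact div_pos (mul_pos hp1 hs) two_pos
  have hk := kk_pos (p := p) hp
  have hξ0 : 0 ≤ γ / (2 * Real.sqrt ω) := by positivity
  have hξ1 : γ / (2 * Real.sqrt ω) < 1 := xi_lt_one hγ hω
  have hka : kk p * aa p ω = Real.sqrt ω := kk_mul_aa hp
  have hcont : Continuous (phi γ p ω) := by
    have h : phi γ p ω = fun x => gg p ω (aa p ω * |x| + bb γ ω) :=
      funext (phi_eq hp hω0)
    rw [h]
    exact contDiff_gg.continuous.comp
      ((continuous_const.mul continuous_abs).add continuous_const)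
  refine ⟨?_, ?_, hcont, ?_, ?_, ?_, ?_, ?_⟩
  · intro x
    rw [phi, phi, abs_neg]
  · intro x
    rw [phi_eq hp hω0]
    exact gg_pos hp hω0 _
  · -- ContDiffOn
    intro x hx
    apply ContDiffAt.contDiffWithinAt
    rcases (show x ≠ 0 by simpa using hx).lt_or_gt with hneg | hpos
    · have hF : ContDiff ℝ 2 (fun y => gg p ω (-aa p ω * y + bb γ ω)) :=
        contDiff_gg.comp ((contDiff_const.mul contDiff_id).add contDiff_const)
      exact hF.contDiffAt.congr_of_eventuallyEq (phi_eventually_neg hp hω0 hneg)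
    · have hF : ContDiff ℝ 2 (fun y => gg p ω (aa p ω * y + bb γ ω)) :=
        contDiff_gg.comp ((contDiff_const.mul contDiff_id).add contDiff_const)
      exact hF.contDiffAt.congr_of_eventuallyEq (phi_eventually_pos hp hω0 hpos)
  · -- ODE
    intro x hx
    rcases hx.lt_or_gt with hneg | hpos
    · have hev := phi_eventually_neg (γ := γ) hp hω0 hneg
      have hphi : phi γ p ω x = gg p ω (-aa p ω * x + bb γ ω) := hev.eq_of_nhds
      rw [deriv2_phi_eq hev, hphi]
      have hid := ode_identity hp hω0 (-aa p ω * x + bb γ ω)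
      have he : gg2 p ω (-aa p ω * x + bb γ ω) * -aa p ω * -aa p ω
          = aa p ω ^ 2 * gg2 p ω (-aa p ω * x + bb γ ω) := by ring
      rw [he]
      linarith
    · have hev := phi_eventually_pos (γ := γ) hp hω0 hpos
      have hphi : phi γ p ω x = gg p ω (aa p ω * x + bb γ ω) := hev.eq_of_nhds
      rw [deriv2_phi_eq hev, hphi]
      have hid := ode_identity hp hω0 (aa p ω * x + bb γ ω)
      have he : gg2 p ω (aa p ω * x + bb γ ω) * aa p ω * aa p ω
          = aa p ω ^ 2 * gg2 p ω (aa p ω * x + bb γ ω) := by ring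
      rw [he]
      linarith
  · -- one-sided derivatives
    have hphi0 : phi γ p ω 0 = gg p ω (bb γ ω) := by
      rw [phi_eq hp hω0]
      norm_num
    have hgg1 : gg1 p ω (bb γ ω)
        = -kk p * gg p ω (bb γ ω) * (γ / (2 * Real.sqrt ω)) := by
      rw [gg1, bb, T_artanh hξ0 hξ1]
    have h4 : gg1 p ω (bb γ ω) * aa p ω = -(γ / 2) * gg p ω (bb γ ω) := by
      rw [hgg1]
      have h2s : (2 : ℝ) * Real.sqrt ω ≠ 0 := by positivity
      field_simp
      linear_combination (-gg p ω (bb γ ω)) * hka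
    refine ⟨gg1 p ω (bb γ ω) * aa p ω, gg1 p ω (bb γ ω) * -aa p ω, ?_, ?_, ?_, ?_⟩
    · have h := (hasDerivAt_comp_affine (p := p) (ω := ω) (γ := γ)
        (aa p ω) 0).hasDerivWithinAt (s := Ici (0:ℝ))
      simp only [mul_zero, zero_add] at h
      refine h.congr ?_ ?_
      · intro y hy
        rw [phi_eq hp hω0, abs_of_nonneg hy]
      · rw [phi_eq hp hω0]
        norm_num
    · have h := (hasDerivAt_comp_affine (p := p) (ω := ω) (γ := γ)
        (-aa p ω) 0).hasDerivWithinAt (s := Iic (0:ℝ))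
      simp only [mul_zero, zero_add] at h
      refine h.congr ?_ ?_
      · intro y hy
        rw [phi_eq hp hω0, abs_of_nonpos hy]
        congr 1
        ring
      · rw [phi_eq hp hω0]
        norm_num
    · rw [hphi0]
      have : gg1 p ω (bb γ ω) * aa p ω - gg1 p ω (bb γ ω) * -aa p ω
          = 2 * (gg1 p ω (bb γ ω) * aa p ω) := by ring
      rw [this, h4]
      ring
    · rw [hphi0, h4]
  · -- MemLp phi
    refine memℒp_of_exp_bound hcont.aestronglyMeasurable (C := cc p ω * 2 ^ kk p) hs
      (ae_of_all _ fun x => ?_)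
    rw [abs_of_pos (by rw [phi_eq hp hω0]; exact gg_pos hp hω0 _), phi_eq hp hω0]
    exact gg_comp_le hγ hp hω x
  · -- MemLp deriv phi
    refine memℒp_of_exp_bound (measurable_deriv _).aestronglyMeasurable hs
      (C := Real.sqrt ω * (cc p ω * 2 ^ kk p)) ?_
    filter_upwards [compl_mem_ae_iff.2 (measure_singleton (0:ℝ))] with x hx
    have hx0 : x ≠ 0 := by simpa using hx
    have key : ∀ u : ℝ, u = aa p ω * |x| + bb γ ω →
        |gg1 p ω u| * aa p ω ≤
          Real.sqrt ω * (cc p ω * 2 ^ kk p) * Real.exp (-Real.sqrt ω * |x|) := by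
      intro u hu
      calc |gg1 p ω u| * aa p ω ≤ kk p * gg p ω u * aa p ω :=
            mul_le_mul_of_nonneg_right (abs_gg1_le hp hω0 u) haa.le
        _ = Real.sqrt ω * gg p ω u := by rw [← hka]; ring
        _ ≤ Real.sqrt ω * (cc p ω * 2 ^ kk p * Real.exp (-Real.sqrt ω * |x|)) := by
            refine mul_le_mul_of_nonneg_left ?_ hs.le
            rw [hu]
            exact gg_comp_le hγ hp hω x
        _ = Real.sqrt ω * (cc p ω * 2 ^ kk p) * Real.exp (-Real.sqrt ω * |x|) := by
            ring
    rcases hx0.lt_or_gt with hneg | hpos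
    · rw [deriv_phi_eq (phi_eventually_neg hp hω0 hneg), abs_mul, abs_neg,
        abs_of_pos haa]
      exact key _ (by rw [abs_of_neg hneg]; ring)
    · rw [deriv_phi_eq (phi_eventually_pos hp hω0 hpos), abs_mul, abs_of_pos haa]
      exact key _ (by rw [abs_of_pos hpos])
end
end

section
/- Let γ > 0, p > 1 and ω > γ²/4. Then the L² norm of φ_ω satisfies ‖φ_ω‖_{L²}² = (4/(p-1)) · ((p+1)/2)^{2/(p-1)} · (2/γ)^{(p-5)/(p-1)} · F(ξ(ω,γ)), where F(ξ) = ξ^{(p-5)/(p-1)} ∫_ξ^1 (1 - s²)^{2/(p-1) - 1} ds for ξ ∈ (0,1). -/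
open MeasureTheory Set
open scoped ENNReal

noncomputable section

lemma my_tanh_eq_exp (y : ℝ) :
    Real.tanh y = (Real.exp (2 * y) - 1) / (Real.exp (2 * y) + 1) := by
  rw [Real.tanh_eq_sinh_div_cosh, Real.sinh_eq, Real.cosh_eq]
  have h1 : Real.exp (2 * y) = Real.exp y * Real.exp y := by
    rw [← Real.exp_add]; ring_nf
  have h2 : Real.exp (-y) = (Real.exp y)⁻¹ := Real.exp_neg y
  have h3 : Real.exp y ≠ 0 := (Real.exp_pos y).ne'
  rw [div_div_div_eq, div_eq_div_iff (by positivity) (by positivity), h1, h2]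
  field_simp

lemma my_tanh_lt_one (y : ℝ) : Real.tanh y < 1 := by
  rw [my_tanh_eq_exp, div_lt_one (by positivity)]
  linarith

lemma my_sech_sq (y : ℝ) : (1 / Real.cosh y) ^ 2 = 1 - Real.tanh y ^ 2 := by
  have hc : Real.cosh y ≠ 0 := (Real.cosh_pos y).ne'
  have := Real.cosh_sq_sub_sinh_sq y
  rw [Real.tanh_eq_sinh_div_cosh]
  field_simp
  linarith

lemma my_hasDerivAt_tanh (y : ℝ) :
    HasDerivAt Real.tanh (1 / Real.cosh y ^ 2) y := by
  have hc : Real.cosh y ≠ 0 := (Real.cosh_pos y).ne'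
  have h := (Real.hasDerivAt_sinh y).div (Real.hasDerivAt_cosh y) hc
  have he : (fun x => Real.sinh x / Real.cosh x) = Real.tanh := by
    funext x; rw [Real.tanh_eq_sinh_div_cosh]
  rw [show (Real.sinh / Real.cosh) = Real.tanh from he] at h
  refine h.congr_deriv ?_
  have := Real.cosh_sq_sub_sinh_sq y
  rw [div_left_inj' (pow_ne_zero 2 hc)]
  linarith

lemma my_tanh_strictMono : StrictMono Real.tanh :=
  strictMono_of_deriv_pos fun y => by
    rw [(my_hasDerivAt_tanh y).deriv]; positivity

lemma my_tanh_artanh {s : ℝ} (h1 : -1 < s) (h2 : s < 1) :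
    Real.tanh (artanh s) = s := by
  have hs1 : (0:ℝ) < 1 - s := by linarith
  have hs2 : (0:ℝ) < 1 + s := by linarith
  have hu : (0:ℝ) < (1 + s) / (1 - s) := by positivity
  rw [my_tanh_eq_exp, artanh]
  have h : 2 * (Real.log ((1 + s) / (1 - s)) / 2) = Real.log ((1 + s) / (1 - s)) := by ring
  rw [h, Real.exp_log hu]
  field_simp
  ring

/-- the squared `L²` norm of `φ_ω`. -/
theorem stmt2 (γ p ω : ℝ) (hγ : 0 < γ) (hp : 1 < p) (hω : γ ^ 2 / 4 < ω) :
    (∫ x : ℝ, phi γ p ω x ^ 2) =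
      4 / (p - 1) * ((p + 1) / 2) ^ (2 / (p - 1)) * (2 / γ) ^ ((p - 5) / (p - 1)) *
        ((γ / (2 * Real.sqrt ω)) ^ ((p - 5) / (p - 1)) *
          ∫ s in (γ / (2 * Real.sqrt ω))..1, (1 - s ^ 2) ^ (2 / (p - 1) - 1)) := by
  have hω0 : 0 < ω := lt_of_le_of_lt (by positivity) hω
  have hp1 : (0:ℝ) < p - 1 := by linarith
  set q := Real.sqrt ω with hqdef
  have hsq : 0 < q := Real.sqrt_pos.2 hω0
  have hq2 : q ^ 2 = ω := Real.sq_sqrt hω0.le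
  have hγq : γ < 2 * q := by nlinarith
  set ξ := γ / (2 * q) with hξdef
  have hξ0 : 0 < ξ := by positivity
  have hξ1 : ξ < 1 := (div_lt_one (by positivity)).2 hγq
  set a := (p - 1) * q / 2 with ha
  have ha0 : 0 < a := by positivity
  set b := artanh ξ with hb
  set k := 2 / (p - 1) with hk
  have hk0 : 0 < k := by positivity
  set C := (p + 1) * ω / 2 with hC
  have hC0 : 0 < C := by rw [hC]; nlinarith
  set m := (p - 5) / (p - 1) with hm
  have htb : Real.tanh b = ξ := my_tanh_artanh (by linarith) hξ1
  set f : ℝ → ℝ := fun x => Real.tanh (a * x + b) with hf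
  set f' : ℝ → ℝ := fun x => a * (1 / Real.cosh (a * x + b)) ^ 2 with hf'
  set h : ℝ → ℝ := fun s => C ^ k / a * (1 - s ^ 2) ^ (k - 1) with hh
  have hfd : ∀ x : ℝ, HasDerivAt f (f' x) x := by
    intro x
    have h1 : HasDerivAt (fun y : ℝ => a * y + b) a x := by
      simpa using ((hasDerivAt_id x).const_mul a).add_const b
    have h2 := (my_hasDerivAt_tanh (a * x + b)).comp x h1
    refine h2.congr_deriv ?_
    simp only [hf']
    ring
  have hmono : StrictMono f := by
    intro x y hxy
    apply my_tanh_strictMono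
    nlinarith
  have himg : f '' Ioi 0 = Ioo ξ 1 := by
    ext s
    constructor
    · rintro ⟨x, hx, rfl⟩
      refine ⟨?_, my_tanh_lt_one _⟩
      calc ξ = Real.tanh b := htb.symm
        _ < Real.tanh (a * x + b) := my_tanh_strictMono (by simp only [Set.mem_Ioi] at hx; nlinarith)
    · rintro ⟨hs1, hs2⟩
      have hs1' : -1 < s := by linarith
      have hts : Real.tanh (artanh s) = s := my_tanh_artanh hs1' hs2
      have hlt : Real.tanh b < Real.tanh (artanh s) := by rw [htb, hts]; exact hs1
      have hblt : b < artanh s := my_tanh_strictMono.lt_iff_lt.1 hlt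
      refine ⟨(artanh s - b) / a, by simpa using div_pos (sub_pos.2 hblt) ha0, ?_⟩
      show Real.tanh (a * ((artanh s - b) / a) + b) = s
      rw [mul_div_cancel₀ _ ha0.ne']
      simpa using hts
  -- pointwise identity on Ioi 0
  have hpt : ∀ x ∈ Ioi (0:ℝ), phi γ p ω x ^ 2 = |f' x| • h (f x) := by
    intro x hx
    have hx0 : (0:ℝ) < x := hx
    have habs : |x| = x := abs_of_pos hx0
    set y := a * x + b with hy
    set u := (1 / Real.cosh y) ^ 2 with hu
    have hu0 : 0 < u := by positivity
    have hphi : phi γ p ω x = (C * u) ^ (1 / (p - 1)) := by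
      rw [phi, habs]
    have hfx : 1 - f x ^ 2 = u := (my_sech_sq y).symm
    have hlhs : phi γ p ω x ^ 2 = C ^ k * u ^ k := by
      rw [hphi, ← Real.rpow_natCast ((C * u) ^ (1 / (p - 1))) 2,
        ← Real.rpow_mul (by positivity)]
      rw [Real.mul_rpow hC0.le hu0.le]
      norm_num
      rw [hk]
      ring_nf
    have huk : u * u ^ (k - 1) = u ^ k := by
      nth_rewrite 1 [← Real.rpow_one u]
      rw [← Real.rpow_add hu0]
      ring_nf
    have hrhs : |f' x| • h (f x) = a * u * (C ^ k / a * u ^ (k - 1)) := by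
      show |f' x| * (C ^ k / a * (1 - f x ^ 2) ^ (k - 1)) = _
      rw [hfx]
      congr 1
      exact abs_of_pos (show (0:ℝ) < a * u from mul_pos ha0 hu0)
    rw [hlhs, hrhs]
    have : a * u * (C ^ k / a * u ^ (k - 1)) = C ^ k * (u * u ^ (k - 1)) := by
      field_simp
    rw [this, huk]
  -- main computation
  have step1 : (∫ x : ℝ, phi γ p ω x ^ 2) = 2 * ∫ x in Ioi (0:ℝ), phi γ p ω x ^ 2 := by
    rw [← integral_comp_abs (f := fun t => phi γ p ω t ^ 2)]
    congr 1
    funext x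
    rw [phi, phi, abs_abs]
  have step2 : (∫ x in Ioi (0:ℝ), phi γ p ω x ^ 2) = ∫ s in Ioo ξ 1, h s := by
    rw [MeasureTheory.setIntegral_congr_fun measurableSet_Ioi hpt, ← himg]
    exact (MeasureTheory.integral_image_eq_integral_abs_deriv_smul measurableSet_Ioi
      (fun x _ => (hfd x).hasDerivWithinAt) (hmono.injective.injOn) h).symm
  have step3 : (∫ s in Ioo ξ 1, h s) = C ^ k / a * ∫ s in Ioo ξ 1, (1 - s ^ 2) ^ (k - 1) := by
    rw [hh]
    exact MeasureTheory.integral_const_mul _ _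
  have step4 : (∫ s in ξ..1, (1 - s ^ 2) ^ (k - 1)) = ∫ s in Ioo ξ 1, (1 - s ^ 2) ^ (k - 1) := by
    rw [intervalIntegral.integral_of_le hξ1.le, MeasureTheory.integral_Ioc_eq_integral_Ioo]
  rw [step1, step2, step3, ← step4]
  -- final algebra
  have hcoef : 2 * (C ^ k / a) = 4 / (p - 1) * ((p + 1) / 2) ^ k * (2 / γ) ^ m * ξ ^ m := by
    have h1 : (2 / γ) ^ m * ξ ^ m = q ^ (-m) := by
      rw [← Real.mul_rpow (by positivity) hξ0.le, hξdef]
      have : 2 / γ * (γ / (2 * q)) = q⁻¹ := by field_simp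
      rw [this, Real.inv_rpow hsq.le, ← Real.rpow_neg hsq.le]
    have e4 : q ^ ((2:ℝ) * k) = q * q ^ (-m) := by
      rw [show (2:ℝ) * k = 1 + (-m) by rw [hk, hm]; field_simp; ring,
        Real.rpow_add hsq, Real.rpow_one]
    have hCk : C ^ k = ((p + 1) / 2) ^ k * (q * q ^ (-m)) := by
      rw [show C = (p + 1) / 2 * q ^ ((2:ℝ)) by
        rw [hC, Real.rpow_two, hq2]; ring]
      rw [Real.mul_rpow (by linarith) (Real.rpow_nonneg hsq.le _)]
      congr 1
      rw [← Real.rpow_mul hsq.le]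
      exact e4
    rw [mul_assoc, h1, hCk, ha]
    field_simp
    ring
  linear_combination (∫ s in ξ..1, (1 - s ^ 2) ^ (k - 1)) * hcoef
end
end

section
/- For every p > 5 there exists a unique ξ ∈ (0,1) such that ((p-5)/(p-1)) ∫_ξ^1 (1 - s²)^{2/(p-1) - 1} ds = ξ (1 - ξ²)^{2/(p-1) - 1}. (This unique solution is denoted ξ₀(p).) -/
open MeasureTheory Set
open scoped ENNReal

noncomputable section

open intervalIntegral Filter Topology

lemma faux_intble {r : ℝ} (hr1 : -1 < r) (hr0 : r < 0) :
    IntervalIntegrable (fun s : ℝ => (1 - s ^ 2) ^ r) volume 0 1 := by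
  have hg : IntervalIntegrable (fun s : ℝ => (1 - s) ^ r) volume 0 1 := by
    have := (intervalIntegrable_rpow' (a := 0) (b := 1) hr1).comp_sub_left 1
    simpa using this.symm
  have hm : Measurable fun s : ℝ => (1 - s ^ 2) ^ r := by fun_prop
  refine hg.mono_fun hm.aestronglyMeasurable.restrict ?_
  have huIoc : Set.uIoc (0:ℝ) 1 = Set.Ioc 0 1 := Set.uIoc_of_le (by norm_num)
  rw [EventuallyLE, MeasureTheory.ae_restrict_iff' measurableSet_uIoc]
  filter_upwards with s hs
  rw [huIoc] at hs
  obtain ⟨hs0, hs1⟩ := hs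
  rcases eq_or_lt_of_le hs1 with h1 | h1
  · subst h1
    simp [Real.zero_rpow (ne_of_lt hr0)]
  · have h1s : 0 < 1 - s := by linarith
    have h1s2 : 1 - s ≤ 1 - s ^ 2 := by nlinarith
    have hb : (1 - s ^ 2) ^ r ≤ (1 - s) ^ r :=
      Real.rpow_le_rpow_of_nonpos h1s h1s2 hr0.le
    have h2 : (0:ℝ) ≤ (1 - s ^ 2) ^ r := Real.rpow_nonneg (by nlinarith) r
    rw [Real.norm_eq_abs, Real.norm_eq_abs, abs_of_nonneg h2,
      abs_of_nonneg (Real.rpow_nonneg h1s.le r)]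
    exact hb


/-- existence and uniqueness of `ξ₀(p)`. -/
theorem stmt4 (p : ℝ) (hp : 5 < p) :
    ∃! ξ : ℝ, ξ ∈ Ioo (0:ℝ) 1 ∧
      (p - 5) / (p - 1) * ∫ s in ξ..1, (1 - s ^ 2) ^ (2 / (p - 1) - 1) =
        ξ * (1 - ξ ^ 2) ^ (2 / (p - 1) - 1) := by
  set r : ℝ := 2 / (p - 1) - 1 with hr
  set c : ℝ := (p - 5) / (p - 1) with hc
  have hp1 : (0:ℝ) < p - 1 := by linarith
  have hr1 : -1 < r := by
    have : 0 < 2 / (p - 1) := by positivity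
    rw [hr]; linarith
  have hr0 : r < 0 := by
    have : 2 / (p - 1) < 1 := by rw [div_lt_one hp1]; linarith
    rw [hr]; linarith
  have hcpos : 0 < c := div_pos (by linarith) hp1
  set f : ℝ → ℝ := fun s => (1 - s ^ 2) ^ r with hf
  have hint01 : IntervalIntegrable f volume 0 1 := faux_intble hr1 hr0
  have hintsub : ∀ x y : ℝ, 0 ≤ x → x ≤ y → y ≤ 1 → IntervalIntegrable f volume x y := by
    intro x y hx hxy hy
    apply hint01.mono_set
    rw [Set.uIcc_of_le (by norm_num : (0:ℝ) ≤ 1), Set.uIcc_of_le hxy]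
    exact Set.Icc_subset_Icc hx hy
  set g : ℝ → ℝ := fun ξ => ξ * (1 - ξ ^ 2) ^ r - c * ∫ s in ξ..1, f s with hg
  have hfnn : ∀ s ∈ Set.Icc (0:ℝ) 1, 0 ≤ f s := by
    intro s hs
    exact Real.rpow_nonneg (by nlinarith [hs.1, hs.2]) r
  have hmono : StrictMonoOn g (Set.Ico (0:ℝ) 1) := by
    intro x hx y hy hxy
    have hx0 : 0 ≤ x := hx.1
    have hy1 : y < 1 := hy.2
    have hA : (0:ℝ) < (1 - x ^ 2) ^ r := Real.rpow_pos_of_pos (by nlinarith [hx.2]) r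
    have hAB : (1 - x ^ 2) ^ r ≤ (1 - y ^ 2) ^ r :=
      Real.rpow_le_rpow_of_nonpos (by nlinarith) (by nlinarith) hr0.le
    have h1 : x * (1 - x ^ 2) ^ r < y * (1 - y ^ 2) ^ r :=
      calc x * (1 - x ^ 2) ^ r < y * (1 - x ^ 2) ^ r := mul_lt_mul_of_pos_right hxy hA
        _ ≤ y * (1 - y ^ 2) ^ r := mul_le_mul_of_nonneg_left hAB (by linarith)
    have hadd : (∫ s in x..y, f s) + ∫ s in y..1, f s = ∫ s in x..1, f s :=
      integral_add_adjacent_intervals (hintsub x y hx0 hxy.le hy1.le) (hintsub y 1 (by linarith) hy1.le le_rfl)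
    have hnn : 0 ≤ ∫ s in x..y, f s := by
      apply intervalIntegral.integral_nonneg hxy.le
      intro u hu
      exact hfnn u ⟨le_trans hx0 hu.1, le_trans hu.2 hy1.le⟩
    have h2 : (∫ s in y..1, f s) ≤ ∫ s in x..1, f s := by linarith
    have h3 := mul_le_mul_of_nonneg_left h2 hcpos.le
    simp only [hg]
    linarith
  set Cv : ℝ := ∫ s in (0:ℝ)..1, f s with hCv
  have hCpos : 0 < Cv := by
    apply intervalIntegral_pos_of_pos_on hint01 _ one_pos
    intro s hs
    exact Real.rpow_pos_of_pos (by nlinarith [hs.1, hs.2]) r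
  have hsplit : ∀ x : ℝ, 0 ≤ x → x ≤ 1 → (∫ s in (0:ℝ)..x, f s) + ∫ s in x..1, f s = Cv :=
    fun x hx0 hx1 =>
      integral_add_adjacent_intervals (hintsub 0 x le_rfl hx0 hx1) (hintsub x 1 hx0 hx1 le_rfl)
  have hg0 : g 0 = -(c * Cv) := by simp [hg, hCv, hf]
  have htop : Tendsto (fun ξ : ℝ => ξ * (1 - ξ ^ 2) ^ r) (𝓝[<] (1:ℝ)) atTop := by
    have t1 : Tendsto (fun ξ : ℝ => 1 - ξ ^ 2) (𝓝[<] (1:ℝ)) (𝓝[>] (0:ℝ)) := by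
      rw [tendsto_nhdsWithin_iff]
      constructor
      · have h : Tendsto (fun ξ : ℝ => 1 - ξ ^ 2) (𝓝 (1:ℝ)) (𝓝 (0:ℝ)) := by
          have hcnt : Continuous (fun ξ : ℝ => 1 - ξ ^ 2) :=
            continuous_const.sub (continuous_pow 2)
          simpa using hcnt.tendsto (1:ℝ)
        exact h.mono_left nhdsWithin_le_nhds
      · filter_upwards [Ioo_mem_nhdsLT_of_mem (by constructor <;> norm_num :
          (1:ℝ) ∈ Set.Ioc 0 1)] with ξ hξ
        have h1 := hξ.1; have h2 := hξ.2
        simp only [Set.mem_Ioi]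
        nlinarith
    have t2 : Tendsto (fun u : ℝ => u ^ r) (𝓝[>] (0:ℝ)) atTop := by
      have t3 : Tendsto (fun u : ℝ => u ^ (-r)) (𝓝[>] (0:ℝ)) (𝓝[>] (0:ℝ)) := by
        rw [tendsto_nhdsWithin_iff]
        constructor
        · have h : Tendsto (fun u : ℝ => u ^ (-r)) (𝓝 (0:ℝ)) (𝓝 ((0:ℝ) ^ (-r))) :=
            (Real.continuousAt_rpow_const 0 (-r) (Or.inr (by linarith))).tendsto
          rw [Real.zero_rpow (by intro h'; linarith [neg_eq_zero.mp h'])] at h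
          exact h.mono_left nhdsWithin_le_nhds
        · filter_upwards [self_mem_nhdsWithin] with u hu
          exact Real.rpow_pos_of_pos hu (-r)
      have t4 : Tendsto (fun u : ℝ => (u ^ (-r))⁻¹) (𝓝[>] (0:ℝ)) atTop :=
        tendsto_inv_nhdsGT_zero.comp t3
      refine t4.congr' ?_
      filter_upwards [self_mem_nhdsWithin] with u hu
      rw [← Real.rpow_neg (le_of_lt hu), neg_neg]
    exact Filter.Tendsto.pos_mul_atTop one_pos
      (tendsto_id.mono_left nhdsWithin_le_nhds) (t2.comp t1)
  obtain ⟨b, hb1, hb2⟩ : ∃ b : ℝ, b ∈ Set.Ioo (0:ℝ) 1 ∧ c * Cv < b * (1 - b ^ 2) ^ r := by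
    have h1 := htop.eventually_gt_atTop (c * Cv)
    have h2 : Set.Ioo (0:ℝ) 1 ∈ 𝓝[<] (1:ℝ) :=
      Ioo_mem_nhdsLT_of_mem (by constructor <;> norm_num : (1:ℝ) ∈ Set.Ioc 0 1)
    obtain ⟨b, hb, hb'⟩ := (h1.and h2).exists
    exact ⟨b, hb', hb⟩
  have hgb : 0 < g b := by
    have h1 : (∫ s in b..1, f s) ≤ Cv := by
      have hs := hsplit b hb1.1.le hb1.2.le
      have hnn : 0 ≤ ∫ s in (0:ℝ)..b, f s := by
        apply intervalIntegral.integral_nonneg hb1.1.le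
        intro u hu
        exact hfnn u ⟨hu.1, le_trans hu.2 hb1.2.le⟩
      linarith
    have h3 := mul_le_mul_of_nonneg_left h1 hcpos.le
    simp only [hg]
    linarith
  have hcont : ContinuousOn g (Set.Icc 0 b) := by
    have hIcc : Set.Icc (0:ℝ) b ⊆ Set.Icc (0:ℝ) 1 := Set.Icc_subset_Icc le_rfl hb1.2.le
    have c1 : ContinuousOn (fun ξ : ℝ => ξ * (1 - ξ ^ 2) ^ r) (Set.Icc 0 b) := by
      apply ContinuousOn.mul continuousOn_id
      apply ContinuousOn.rpow_const (continuousOn_const.sub (continuousOn_pow 2))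
      intro x hx
      left
      have h0 := (hIcc hx).1
      have h2 : x < 1 := lt_of_le_of_lt hx.2 hb1.2
      show (1:ℝ) - x ^ 2 ≠ 0
      nlinarith
    have c2 : ContinuousOn (fun ξ : ℝ => ∫ s in (0:ℝ)..ξ, f s) (Set.Icc 0 b) := by
      have hIntOn : IntegrableOn f (Set.uIcc (0:ℝ) 1) volume := by
        rw [Set.uIcc_of_le (by norm_num : (0:ℝ) ≤ 1)]
        exact (intervalIntegrable_iff_integrableOn_Icc_of_le (by norm_num)).mp hint01
      have := intervalIntegral.continuousOn_primitive_interval (a := 0) (b := 1)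
        (μ := volume) (f := f) hIntOn
      apply this.mono
      rw [Set.uIcc_of_le (by norm_num : (0:ℝ) ≤ 1)]
      exact hIcc
    have c3 : ContinuousOn
        (fun ξ : ℝ => ξ * (1 - ξ ^ 2) ^ r - c * (Cv - ∫ s in (0:ℝ)..ξ, f s))
        (Set.Icc 0 b) :=
      c1.sub (continuousOn_const.mul (continuousOn_const.sub c2))
    apply c3.congr
    intro x hx
    have hs := hsplit x hx.1 (le_trans hx.2 hb1.2.le)
    simp only [hg]
    rw [show (∫ s in x..1, f s) = Cv - ∫ s in (0:ℝ)..x, f s by linarith]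
  obtain ⟨ξ, hξmem, hgξ⟩ : ∃ ξ ∈ Set.Icc (0:ℝ) b, g ξ = 0 := by
    have himage := intermediate_value_Icc hb1.1.le hcont
    have h0mem : (0:ℝ) ∈ Set.Icc (g 0) (g b) := by
      constructor
      · rw [hg0]; nlinarith
      · exact hgb.le
    obtain ⟨ξ, hξ, hgξ⟩ := himage h0mem
    exact ⟨ξ, hξ, hgξ⟩
  have hξIoo : ξ ∈ Set.Ioo (0:ℝ) 1 := by
    constructor
    · rcases eq_or_lt_of_le hξmem.1 with h | h
      · exfalso
        rw [← h] at hgξ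
        rw [hg0] at hgξ
        nlinarith
      · exact h
    · exact lt_of_le_of_lt hξmem.2 hb1.2
  refine ⟨ξ, ⟨hξIoo, ?_⟩, ?_⟩
  · have : g ξ = 0 := hgξ
    simp only [hg] at this
    linarith
  · rintro y ⟨hyIoo, hyeq⟩
    have hgy : g y = 0 := by simp only [hg]; linarith
    have hy' : y ∈ Set.Ico (0:ℝ) 1 := ⟨hyIoo.1.le, hyIoo.2⟩
    have hξ' : ξ ∈ Set.Ico (0:ℝ) 1 := ⟨hξIoo.1.le, hξIoo.2⟩
    exact hmono.injOn hy' hξ' (by rw [hgy, hgξ])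
end
end

section
/- For every p > 5 there exists a unique ξ ∈ (0,1) such that ((p-5)/(p-1)) ∫_ξ^1 (1 - s²)^{2/(p-1)} ds = ξ (1 - ξ²)^{2/(p-1)}. (This unique solution is denoted ξ₁(p).) -/
open MeasureTheory Set
open scoped ENNReal

noncomputable section

namespace Stmt5Aux

/-- auxiliary integrand -/
def f (p s : ℝ) : ℝ := (1 - s ^ 2) ^ (2 / (p - 1))

/-- auxiliary function whose zero is `ξ₁(p)` -/
def G (p ξ : ℝ) : ℝ :=
  (p - 5) / (p - 1) * (∫ s in ξ..(1:ℝ), f p s) - ξ * f p ξ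

variable {p : ℝ}

theorem f_continuous (hp : 5 < p) : Continuous (f p) := by
  have hp1 : (0:ℝ) < p - 1 := by linarith
  have hα : 0 ≤ 2 / (p - 1) := by positivity
  rw [continuous_iff_continuousAt]
  intro x
  exact (Real.continuousAt_rpow_const _ _ (Or.inr hα)).comp (by fun_prop)

theorem F_hasDerivAt (hp : 5 < p) (ξ : ℝ) :
    HasDerivAt (fun u => ∫ s in u..(1:ℝ), f p s) (-(f p ξ)) ξ := by
  have hfc : Continuous (f p) := f_continuous hp
  have h1 : HasDerivAt (fun u => ∫ s in (1:ℝ)..u, f p s) (f p ξ) ξ :=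
    (hfc.integral_hasStrictDerivAt 1 ξ).hasDerivAt
  have heq : (fun u => ∫ s in u..(1:ℝ), f p s) = fun u => -∫ s in (1:ℝ)..u, f p s :=
    funext fun u => intervalIntegral.integral_symm 1 u
  rw [heq]
  exact h1.neg

theorem G_continuous (hp : 5 < p) : Continuous (G p) := by
  have hfc : Continuous (f p) := f_continuous hp
  have hFc : Continuous (fun u => ∫ s in u..(1:ℝ), f p s) :=
    continuous_iff_continuousAt.mpr fun x => (F_hasDerivAt hp x).continuousAt
  exact ((continuous_const.mul hFc).sub (continuous_id.mul hfc))

theorem G_hasDerivAt (hp : 5 < p) {ξ : ℝ} (hξ : ξ ∈ Ioo (0:ℝ) 1) :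
    HasDerivAt (G p)
      ((1 - ξ ^ 2) ^ (2 / (p - 1) - 1) * (2 * (ξ ^ 2 - (p - 3) / (p - 1)))) ξ := by
  obtain ⟨h0, h1⟩ := hξ
  have hp1 : (0:ℝ) < p - 1 := by linarith
  have hbase : 0 < 1 - ξ ^ 2 := by nlinarith
  have hinner : HasDerivAt (fun s : ℝ => 1 - s ^ 2) (-(2 * ξ)) ξ := by
    simpa using ((hasDerivAt_pow 2 ξ).const_sub 1)
  have hfd : HasDerivAt (f p)
      (2 / (p - 1) * (1 - ξ ^ 2) ^ (2 / (p - 1) - 1) * (-(2 * ξ))) ξ := by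
    have := (Real.hasDerivAt_rpow_const (x := 1 - ξ ^ 2) (p := 2 / (p - 1))
      (Or.inl hbase.ne')).comp ξ hinner
    rw [show f p = fun s => (1 - s ^ 2) ^ (2 / (p - 1)) from rfl]
    simpa [mul_assoc, Function.comp_def] using this
  have hG : HasDerivAt (G p)
      ((p - 5) / (p - 1) * (-(f p ξ)) -
        (1 * f p ξ + ξ * (2 / (p - 1) * (1 - ξ ^ 2) ^ (2 / (p - 1) - 1) * (-(2 * ξ))))) ξ :=
    ((F_hasDerivAt hp ξ).const_mul _).sub ((hasDerivAt_id ξ).mul hfd)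
  convert hG using 1
  have hsplit : f p ξ = (1 - ξ ^ 2) ^ (2 / (p - 1) - 1) * (1 - ξ ^ 2) := by
    rw [f, ← Real.rpow_add_one hbase.ne']
    congr 1
    ring
  rw [hsplit]
  field_simp
  ring

theorem G_one (hp : 5 < p) : G p 1 = 0 := by
  have hp1 : (0:ℝ) < p - 1 := by linarith
  have hα : 2 / (p - 1) ≠ 0 := by positivity
  have h : (1:ℝ) - 1 ^ 2 = 0 := by norm_num
  simp [G, f, h, Real.zero_rpow hα]

theorem G_zero_pos (hp : 5 < p) : 0 < G p 0 := by
  have hfc : Continuous (f p) := f_continuous hp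
  have hpos : 0 < ∫ s in (0:ℝ)..1, f p s := by
    apply intervalIntegral.intervalIntegral_pos_of_pos_on (hfc.intervalIntegrable 0 1)
      (fun x hx => ?_) one_pos
    have : 0 < 1 - x ^ 2 := by nlinarith [hx.1, hx.2]
    exact Real.rpow_pos_of_pos this _
  have hc : 0 < (p - 5) / (p - 1) := by apply div_pos <;> linarith
  have : G p 0 = (p - 5) / (p - 1) * ∫ s in (0:ℝ)..1, f p s := by simp [G]
  rw [this]
  exact mul_pos hc hpos

end Stmt5Aux

-- STATEMENT 5: existence and uniqueness of `ξ₁(p)`.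
open Stmt5Aux in
/-- existence and uniqueness of `ξ₁(p)`. -/
theorem stmt5 (p : ℝ) (hp : 5 < p) :
    ∃! ξ : ℝ, ξ ∈ Ioo (0:ℝ) 1 ∧
      (p - 5) / (p - 1) * ∫ s in ξ..1, (1 - s ^ 2) ^ (2 / (p - 1)) =
        ξ * (1 - ξ ^ 2) ^ (2 / (p - 1)) := by
  have hp1 : (0:ℝ) < p - 1 := by linarith
  set t : ℝ := (p - 3) / (p - 1) with ht
  have ht0 : 0 < t := by apply div_pos <;> linarith
  have ht1 : t < 1 := by rw [div_lt_one hp1]; linarith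
  set r : ℝ := Real.sqrt t with hr
  have hr0 : 0 < r := Real.sqrt_pos.mpr ht0
  have hrsq : r ^ 2 = t := Real.sq_sqrt ht0.le
  have hr1 : r < 1 := by nlinarith [Real.sqrt_nonneg t]
  -- strict antitonicity on [0, r]
  have hanti : StrictAntiOn (G p) (Icc 0 r) := by
    apply strictAntiOn_of_deriv_neg (convex_Icc _ _) (G_continuous hp).continuousOn
    intro x hx
    rw [interior_Icc] at hx
    have hx1 : x < 1 := lt_trans hx.2 hr1
    rw [(G_hasDerivAt hp ⟨hx.1, hx1⟩).deriv]
    have hbase : 0 < 1 - x ^ 2 := by nlinarith [hx.1]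
    apply mul_neg_of_pos_of_neg (Real.rpow_pos_of_pos hbase _)
    have : x ^ 2 < t := by nlinarith [hx.1, hx.2]
    linarith
  -- strict monotonicity on [r, 1]
  have hmono : StrictMonoOn (G p) (Icc r 1) := by
    apply strictMonoOn_of_deriv_pos (convex_Icc _ _) (G_continuous hp).continuousOn
    intro x hx
    rw [interior_Icc] at hx
    have hx0 : 0 < x := lt_trans hr0 hx.1
    rw [(G_hasDerivAt hp ⟨hx0, hx.2⟩).deriv]
    have hbase : 0 < 1 - x ^ 2 := by nlinarith [hx.2, hx0]
    apply mul_pos (Real.rpow_pos_of_pos hbase _)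
    have : t < x ^ 2 := by nlinarith [hx.1]
    linarith
  -- G is negative on [r, 1)
  have hneg : ∀ x ∈ Ico r 1, G p x < 0 := by
    intro x hx
    have := hmono ⟨hx.1, hx.2.le⟩ ⟨hr1.le, le_refl 1⟩ hx.2
    rwa [G_one hp] at this
  have hGr : G p r < 0 := hneg r ⟨le_refl r, hr1⟩
  -- existence by IVT
  have hmem : (0:ℝ) ∈ Ioo (G p r) (G p 0) := ⟨hGr, G_zero_pos hp⟩
  obtain ⟨ξ, hξmem, hξ0⟩ := intermediate_value_Ioo' hr0.le
    ((G_continuous hp).continuousOn (s := Icc 0 r)) hmem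
  have hξIoo : ξ ∈ Ioo (0:ℝ) 1 := ⟨hξmem.1, lt_trans hξmem.2 hr1⟩
  refine ⟨ξ, ⟨hξIoo, ?_⟩, ?_⟩
  · have := hξ0
    simp only [G, f, sub_eq_zero] at this
    exact this
  · rintro ξ' ⟨⟨h0', h1'⟩, heq'⟩
    have hGξ' : G p ξ' = 0 := by
      simp only [G, f, sub_eq_zero]
      exact heq'
    have hlt : ξ' < r := by
      by_contra h
      push_neg at h
      have := hneg ξ' ⟨h, h1'⟩
      rw [hGξ'] at this
      exact lt_irrefl 0 this
    exact hanti.injOn ⟨h0'.le, hlt.le⟩ ⟨hξmem.1.le, hξmem.2.le⟩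
      (hGξ'.trans hξ0.symm)
end
end

section
/- For every p > 5 there exists a unique ξ ∈ (0,1) such that ((p-5)/2) ∫_ξ^1 (1 - s²)^{2/(p-1)} ds = ξ (1 - ξ²)^{2/(p-1)}. (This unique solution is denoted ξ₂(p).) -/
open MeasureTheory Set
open scoped ENNReal

noncomputable section

/-- existence and uniqueness of `ξ₂(p)`. -/
theorem stmt6 (p : ℝ) (hp : 5 < p) :
    ∃! ξ : ℝ, ξ ∈ Ioo (0:ℝ) 1 ∧
      (p - 5) / 2 * ∫ s in ξ..1, (1 - s ^ 2) ^ (2 / (p - 1)) =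
        ξ * (1 - ξ ^ 2) ^ (2 / (p - 1)) := by
  have hp1 : (0:ℝ) < p - 1 := by linarith
  set α : ℝ := 2 / (p - 1) with hαdef
  have hα : 0 < α := div_pos two_pos hp1
  set c : ℝ := (p - 5) / 2 with hcdef
  have hc : 0 < c := by rw [hcdef]; linarith
  set f : ℝ → ℝ := fun s => (1 - s ^ 2) ^ α with hfdef
  set g : ℝ → ℝ := fun ξ => c * (∫ s in ξ..1, f s) - ξ * f ξ with hgdef
  -- the goal is equivalent to g ξ = 0
  have hgoal : ∀ ξ : ℝ,
      (c * ∫ s in ξ..1, f s) = ξ * f ξ ↔ g ξ = 0 := by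
    intro ξ; rw [hgdef]; exact sub_eq_zero.symm
  -- continuity of f
  have hfc : Continuous f := by
    rw [hfdef]
    refine continuous_iff_continuousAt.2 fun x => ?_
    exact (Real.continuousAt_rpow_const _ _ (Or.inr hα.le)).comp
      (Continuous.continuousAt (by continuity))
  have hfi : ∀ a b : ℝ, IntervalIntegrable f volume a b := fun a b =>
    hfc.intervalIntegrable a b
  have hIc : Continuous fun ξ : ℝ => ∫ s in ξ..1, f s := by
    have h1 := intervalIntegral.continuous_primitive hfi 1
    have heq : (fun ξ : ℝ => ∫ s in ξ..1, f s) = fun ξ => -∫ s in (1:ℝ)..ξ, f s := by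
      funext ξ; rw [intervalIntegral.integral_symm]
    rw [heq]; exact h1.neg
  have hgc : Continuous g := by
    rw [hgdef]
    exact (continuous_const.mul hIc).sub (continuous_id.mul hfc)
  -- values at endpoints
  have hf1 : f 1 = 0 := by
    rw [hfdef]; simp [Real.zero_rpow hα.ne']
  have hg1 : g 1 = 0 := by
    rw [hgdef]; simp [hf1]
  have hg0 : 0 < g 0 := by
    have hIpos : 0 < ∫ s in (0:ℝ)..1, f s := by
      refine intervalIntegral.intervalIntegral_pos_of_pos_on (hfi 0 1) ?_ one_pos
      intro x hx
      rw [hfdef]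
      exact Real.rpow_pos_of_pos (by nlinarith [hx.1, hx.2]) α
    have : g 0 = c * ∫ s in (0:ℝ)..1, f s := by rw [hgdef]; ring
    rw [this]; exact mul_pos hc hIpos
  -- derivative of g on (0,1)
  have hderiv : ∀ ξ ∈ Ioo (0:ℝ) 1, HasDerivAt g
      ((1 - ξ ^ 2) ^ (α - 1) * ((c + 1 + 2 * α) * ξ ^ 2 - (c + 1))) ξ := by
    intro ξ hξ
    have h1 : 0 < 1 - ξ ^ 2 := by nlinarith [hξ.1, hξ.2]
    have hI : HasDerivAt (fun u : ℝ => ∫ s in u..1, f s) (-f ξ) ξ :=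
      intervalIntegral.integral_hasDerivAt_left (hfi ξ 1)
        (hfc.stronglyMeasurableAtFilter _ _) hfc.continuousAt
    have hq : HasDerivAt (fun s : ℝ => 1 - s ^ 2) (-(2 * ξ)) ξ := by
      have h := ((hasDerivAt_pow 2 ξ).const_sub 1)
      simpa using h
    have hf' : HasDerivAt f (-(2 * ξ) * α * (1 - ξ ^ 2) ^ (α - 1)) ξ := by
      rw [hfdef]
      exact hq.rpow_const (Or.inl h1.ne')
    have hg' : HasDerivAt g
        (c * (-f ξ) - (1 * f ξ + ξ * (-(2 * ξ) * α * (1 - ξ ^ 2) ^ (α - 1)))) ξ := by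
      rw [hgdef]
      exact (hI.const_mul c).sub ((hasDerivAt_id ξ).mul hf')
    convert hg' using 1
    have hfx : f ξ = (1 - ξ ^ 2) ^ (α - 1) * (1 - ξ ^ 2) := by
      have hkey := Real.rpow_add_one h1.ne' (α - 1)
      rw [show α - 1 + 1 = α by ring] at hkey
      simp only [hfdef]
      exact hkey
    rw [hfx]; ring
  -- the critical point
  set B : ℝ := c + 1 + 2 * α with hBdef
  have hB : 0 < B := by rw [hBdef]; linarith
  have hABpos : 0 < (c + 1) / B := div_pos (by linarith) hB
  have hABlt : (c + 1) / B < 1 := (div_lt_one hB).2 (by rw [hBdef]; linarith)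
  set ξs : ℝ := Real.sqrt ((c + 1) / B) with hξsdef
  have hξs_pos : 0 < ξs := Real.sqrt_pos.2 hABpos
  have hξs_lt1 : ξs < 1 := by
    have h := Real.sqrt_lt_sqrt hABpos.le hABlt
    rwa [Real.sqrt_one] at h
  have hξs_sq : ξs ^ 2 = (c + 1) / B := Real.sq_sqrt hABpos.le
  -- g strictly decreasing on [0, ξs]
  have hanti : StrictAntiOn g (Icc 0 ξs) := by
    refine strictAntiOn_of_deriv_neg (convex_Icc 0 ξs) hgc.continuousOn ?_
    intro x hx
    rw [interior_Icc] at hx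
    have hx1 : x ∈ Ioo (0:ℝ) 1 := ⟨hx.1, hx.2.trans hξs_lt1⟩
    have h1 : 0 < 1 - x ^ 2 := by nlinarith [hx1.1, hx1.2]
    rw [(hderiv x hx1).deriv]
    have hP : 0 < (1 - x ^ 2) ^ (α - 1) := Real.rpow_pos_of_pos h1 _
    have hxsq : x ^ 2 < (c + 1) / B := by
      rw [← hξs_sq]
      exact pow_lt_pow_left₀ hx.2 hx.1.le two_ne_zero
    have h2 : x ^ 2 * B < c + 1 := (lt_div_iff₀ hB).1 hxsq
    have : (c + 1 + 2 * α) * x ^ 2 - (c + 1) < 0 := by rw [← hBdef]; nlinarith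
    exact mul_neg_of_pos_of_neg hP this
  -- g strictly increasing on [ξs, 1]
  have hmono : StrictMonoOn g (Icc ξs 1) := by
    refine strictMonoOn_of_deriv_pos (convex_Icc ξs 1) hgc.continuousOn ?_
    intro x hx
    rw [interior_Icc] at hx
    have hx1 : x ∈ Ioo (0:ℝ) 1 := ⟨hξs_pos.trans hx.1, hx.2⟩
    have h1 : 0 < 1 - x ^ 2 := by nlinarith [hx1.1, hx1.2]
    rw [(hderiv x hx1).deriv]
    have hP : 0 < (1 - x ^ 2) ^ (α - 1) := Real.rpow_pos_of_pos h1 _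
    have hxsq : (c + 1) / B < x ^ 2 := by
      rw [← hξs_sq]
      exact pow_lt_pow_left₀ hx.1 hξs_pos.le two_ne_zero
    have h2 : c + 1 < x ^ 2 * B := (div_lt_iff₀ hB).1 hxsq
    have : 0 < (c + 1 + 2 * α) * x ^ 2 - (c + 1) := by rw [← hBdef]; nlinarith
    exact mul_pos hP this
  have hgξs : g ξs < 0 := by
    have := hmono (left_mem_Icc.2 hξs_lt1.le) (right_mem_Icc.2 hξs_lt1.le) hξs_lt1
    rwa [hg1] at this
  -- existence via IVT
  have hiv : (0:ℝ) ∈ g '' Icc 0 ξs := by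
    apply intermediate_value_Icc' hξs_pos.le hgc.continuousOn
    exact ⟨hgξs.le, hg0.le⟩
  obtain ⟨ξ, hξmem, hξ0⟩ := hiv
  have hξpos : 0 < ξ := by
    rcases eq_or_lt_of_le hξmem.1 with h | h
    · exfalso; rw [← h] at hξ0; exact hg0.ne' hξ0
    · exact h
  have hξlt : ξ < ξs := by
    rcases eq_or_lt_of_le hξmem.2 with h | h
    · exfalso; rw [h] at hξ0; exact hgξs.ne hξ0
    · exact h
  refine ⟨ξ, ⟨⟨hξpos, hξlt.trans hξs_lt1⟩, (hgoal ξ).2 hξ0⟩, ?_⟩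
  rintro y ⟨hy, hyeq⟩
  have hgy : g y = 0 := (hgoal y).1 hyeq
  by_cases hcase : y < ξs
  · exact hanti.injOn ⟨hy.1.le, hcase.le⟩ ⟨hξmem.1, hξmem.2⟩ (hgy.trans hξ0.symm)
  · exfalso
    push_neg at hcase
    have h := hmono ⟨hcase, hy.2.le⟩ (right_mem_Icc.2 hξs_lt1.le) hy.2
    rw [hg1, hgy] at h
    exact lt_irrefl 0 h
end
end

section
/- Let γ > 0 and p > 5. Then the map ω ↦ ‖φ_ω‖_{L²}² is differentiable on (γ²/4, ∞), and for each ω > γ²/4 its derivative is negative if and only if ξ(ω,γ) < ξ₀(p), i.e., if and only if ω > ω₀(p,γ) := γ²/(4 ξ₀(p)²). -/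
open MeasureTheory Set
open scoped ENNReal

noncomputable section

namespace S7

lemma artanh_hasDerivAt {t : ℝ} (h1 : -1 < t) (h2 : t < 1) :
    HasDerivAt artanh (1 / (1 - t ^ 2)) t := by
  have h1' : (0:ℝ) < 1 + t := by linarith
  have h2' : (0:ℝ) < 1 - t := by linarith
  have hu : (0:ℝ) < (1 + t) / (1 - t) := div_pos h1' h2'
  have hd : HasDerivAt (fun x : ℝ => (1 + x) / (1 - x))
      ((1 * (1 - t) - (1 + t) * (-1)) / (1 - t) ^ 2) t := by
    exact (((hasDerivAt_id t).const_add 1)).div ((hasDerivAt_id t).const_sub 1) h2'.ne'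
  have hlog := (hd.log hu.ne')
  have := hlog.div_const 2
  refine (show HasDerivAt artanh _ t from this).congr_deriv ?_
  have hne : (1 - t^2) ≠ 0 := by nlinarith
  field_simp
  ring

lemma artanh_strictMonoOn : StrictMonoOn artanh (Ioo (-1:ℝ) 1) := by
  intro x hx y hy hxy
  have hx1 : (0:ℝ) < 1 + x := by linarith [hx.1]
  have hx2 : (0:ℝ) < 1 - x := by linarith [hx.2]
  have hy1 : (0:ℝ) < 1 + y := by linarith [hy.1]
  have hy2 : (0:ℝ) < 1 - y := by linarith [hy.2]
  have hlt : (1 + x) / (1 - x) < (1 + y) / (1 - y) := by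
    rw [div_lt_div_iff₀ hx2 hy2]; nlinarith
  have := Real.log_lt_log (div_pos hx1 hx2) hlt
  unfold artanh; linarith

lemma artanh_mem_and_eq (y : ℝ) :
    (Real.exp (2*y) - 1) / (Real.exp (2*y) + 1) ∈ Ioo (-1:ℝ) 1 ∧
      artanh ((Real.exp (2*y) - 1) / (Real.exp (2*y) + 1)) = y := by
  have hE : (0:ℝ) < Real.exp (2*y) := Real.exp_pos _
  have hE1 : (0:ℝ) < Real.exp (2*y) + 1 := by linarith
  constructor
  · constructor
    · rw [lt_div_iff₀ hE1]; linarith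
    · rw [div_lt_one hE1]; linarith
  · unfold artanh
    have : (1 + (Real.exp (2*y) - 1) / (Real.exp (2*y) + 1)) /
        (1 - (Real.exp (2*y) - 1) / (Real.exp (2*y) + 1)) = Real.exp (2*y) := by
      field_simp
      ring
    rw [this, Real.log_exp]; ring

lemma cosh_artanh {t : ℝ} (h1 : -1 < t) (h2 : t < 1) :
    (1 / Real.cosh (artanh t)) ^ 2 = 1 - t ^ 2 := by
  have h1' : (0:ℝ) < 1 + t := by linarith
  have h2' : (0:ℝ) < 1 - t := by linarith
  have hu : (0:ℝ) < (1 + t) / (1 - t) := div_pos h1' h2'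
  set e := Real.exp (artanh t) with he_def
  have he : 0 < e := Real.exp_pos _
  have he2 : e ^ 2 = (1 + t) / (1 - t) := by
    rw [he_def, ← Real.exp_nat_mul]
    unfold artanh
    rw [show ((2:ℕ):ℝ) * (Real.log ((1 + t) / (1 - t)) / 2) = Real.log ((1+t)/(1-t)) by push_cast; ring]
    exact Real.exp_log hu
  have hc : Real.cosh (artanh t) = (e + e⁻¹) / 2 := by
    rw [Real.cosh_eq, Real.exp_neg]
  rw [hc]
  have he2' : e ^ 2 * (1 - t) = 1 + t := by
    field_simp at he2 ⊢
    linarith [he2]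
  field_simp
  nlinarith [he, sq_nonneg e, sq_nonneg (e*e - 1)]


/-- the integrand -/
def hfun (p s : ℝ) : ℝ := (1 - s ^ 2) ^ (2 / (p - 1) - 1)
/-- the tail integral -/
def Ffun (p u : ℝ) : ℝ := ∫ s in u..1, hfun p s
/-- the sign function -/
def Gfun (p u : ℝ) : ℝ := (p - 5) / (p - 1) * Ffun p u - u * hfun p u

lemma hfun_pos {p t : ℝ} (h1 : -1 < t) (h2 : t < 1) : 0 < hfun p t :=
  Real.rpow_pos_of_pos (by nlinarith) _

lemma hfun_intInt {p : ℝ} (hp : 1 < p) {a : ℝ} (ha : -1 < a) (ha2 : a ≤ 1) :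
    IntervalIntegrable (hfun p) volume a 1 := by
  have hp1 : (0:ℝ) < p - 1 := by linarith
  have hexp : (-1:ℝ) < 2 / (p - 1) - 1 := by
    have : (0:ℝ) < 2 / (p - 1) := by positivity
    linarith
  have h1 : IntervalIntegrable (fun s : ℝ => (1 - s) ^ (2 / (p - 1) - 1)) volume a 1 := by
    simpa using (intervalIntegral.intervalIntegrable_rpow' (a := 1 - a) (b := 1 - 1) hexp).comp_sub_left 1
  have h2 : IntervalIntegrable
      (fun s : ℝ => (1 - s) ^ (2 / (p - 1) - 1) * (1 + s) ^ (2 / (p - 1) - 1)) volume a 1 := by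
    apply h1.mul_continuousOn
    apply ContinuousOn.rpow_const
    · exact (continuous_const.add continuous_id).continuousOn
    · intro x hx
      rw [uIcc_of_le ha2] at hx
      left
      nlinarith [hx.1]
  apply h2.congr
  intro s hs
  rw [uIoc_of_le ha2] at hs
  have hs1 : (0:ℝ) ≤ 1 - s := by linarith [hs.2]
  have hs2 : (0:ℝ) ≤ 1 + s := by linarith [hs.1]
  unfold hfun
  beta_reduce
  rw [← Real.mul_rpow hs1 hs2]
  ring_nf

lemma hfun_contAt {p t : ℝ} (h1 : -1 < t) (h2 : t < 1) : ContinuousAt (hfun p) t := by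
  apply ContinuousAt.rpow_const
  · exact (continuous_const.sub (continuous_pow 2)).continuousAt
  · left; nlinarith

lemma Ffun_hasDerivAt {p : ℝ} (hp : 1 < p) {t : ℝ} (h1 : -1 < t) (h2 : t < 1) :
    HasDerivAt (Ffun p) (-hfun p t) t := by
  apply intervalIntegral.integral_hasDerivAt_left (hfun_intInt hp h1 h2.le)
  · exact ContinuousAt.stronglyMeasurableAtFilter isOpen_Ioo
      (fun x hx => hfun_contAt hx.1 hx.2) t ⟨h1, h2⟩
  · exact hfun_contAt h1 h2

lemma hfun_hasDerivAt {p t : ℝ} (h1 : -1 < t) (h2 : t < 1) :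
    HasDerivAt (hfun p)
      (-(2 * t) * (2 / (p - 1) - 1) * (1 - t ^ 2) ^ (2 / (p - 1) - 1 - 1)) t := by
  have hin : HasDerivAt (fun s : ℝ => 1 - s ^ 2) (-(2 * t)) t := by
    simpa using (hasDerivAt_pow 2 t).const_sub 1
  exact hin.rpow_const (Or.inl (by nlinarith))

lemma Gfun_hasDerivAt {p : ℝ} (hp : 5 < p) {t : ℝ} (h1 : 0 < t) (h2 : t < 1) :
    HasDerivAt (Gfun p)
      ((p - 5) / (p - 1) * (-hfun p t) -
        (1 * hfun p t +
          t * (-(2 * t) * (2 / (p - 1) - 1) * (1 - t ^ 2) ^ (2 / (p - 1) - 1 - 1)))) t := by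
  have h1' : (-1:ℝ) < t := by linarith
  exact ((Ffun_hasDerivAt (by linarith) h1' h2).const_mul _).sub
    ((hasDerivAt_id t).mul (hfun_hasDerivAt h1' h2))

lemma Gfun_deriv_neg {p : ℝ} (hp : 5 < p) {t : ℝ} (h1 : 0 < t) (h2 : t < 1) :
    (p - 5) / (p - 1) * (-hfun p t) -
        (1 * hfun p t +
          t * (-(2 * t) * (2 / (p - 1) - 1) * (1 - t ^ 2) ^ (2 / (p - 1) - 1 - 1))) < 0 := by
  have hh : 0 < hfun p t := hfun_pos (by linarith) h2
  have hq : 0 < (1 - t ^ 2) ^ (2 / (p - 1) - 1 - 1) := Real.rpow_pos_of_pos (by nlinarith) _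
  have hc : 0 < (p - 5) / (p - 1) := div_pos (by linarith) (by linarith)
  have he : 2 / (p - 1) - 1 < 0 := by
    rw [sub_neg, div_lt_one (by linarith)]; linarith
  nlinarith [mul_pos (mul_pos h1 h1) (mul_pos (neg_pos.2 he) hq)]

lemma Gfun_strictAntiOn {p : ℝ} (hp : 5 < p) : StrictAntiOn (Gfun p) (Ioo 0 1) := by
  apply strictAntiOn_of_deriv_neg (convex_Ioo 0 1)
  · intro t ht
    exact ((Gfun_hasDerivAt hp ht.1 ht.2).differentiableAt.continuousAt).continuousWithinAt
  · rw [interior_Ioo]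
    intro t ht
    rw [(Gfun_hasDerivAt hp ht.1 ht.2).deriv]
    exact Gfun_deriv_neg hp ht.1 ht.2


lemma integral_phi_sq {γ p ω : ℝ} (hγ : 0 < γ) (hp : 5 < p) (hω : γ ^ 2 / 4 < ω) :
    ∫ x : ℝ, phi γ p ω x ^ 2 =
      4 / (p - 1) * ((p + 1) / 2) ^ (2 / (p - 1)) * ω ^ (2 / (p - 1) - 1 / 2) *
        Ffun p (γ / (2 * Real.sqrt ω)) := by
  have hω0 : 0 < ω := lt_trans (by positivity) hω
  have hs : 0 < Real.sqrt ω := Real.sqrt_pos.2 hω0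
  have hs2 : Real.sqrt ω ^ 2 = ω := Real.sq_sqrt hω0.le
  have hp1 : (0:ℝ) < p - 1 := by linarith
  have hγs : γ / 2 < Real.sqrt ω := by
    rw [Real.lt_sqrt (by positivity)]; nlinarith
  set ξ := γ / (2 * Real.sqrt ω) with hξ_def
  have hξ0 : 0 < ξ := by positivity
  have hξ1 : ξ < 1 := by rw [hξ_def, div_lt_one (by positivity)]; linarith
  set a := (p - 1) * Real.sqrt ω / 2 with ha_def
  have ha : 0 < a := by rw [ha_def]; positivity
  set b := artanh ξ with hb_def
  set M := (p + 1) * ω / 2 with hM_def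
  have hM : 0 < M := by rw [hM_def]; positivity
  set α := 2 / (p - 1) with hα_def
  have hα : 0 < α := by rw [hα_def]; positivity
  -- pointwise form
  have hpt : ∀ y : ℝ, phi γ p ω y ^ 2 =
      (fun z : ℝ => M ^ α * ((1 / Real.cosh (a * z + b)) ^ 2) ^ α) |y| := by
    intro y
    have hc : (0:ℝ) < (1 / Real.cosh (a * |y| + b)) ^ 2 := by
      positivity
    show ((M * (1 / Real.cosh (a * |y| + b)) ^ 2) ^ (1 / (p - 1))) ^ (2:ℕ) = _
    rw [← Real.rpow_natCast ((M * (1 / Real.cosh (a * |y| + b)) ^ 2) ^ (1 / (p - 1))) 2,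
      ← Real.rpow_mul (by positivity)]
    rw [show 1 / (p - 1) * ((2:ℕ):ℝ) = α by rw [hα_def]; push_cast; ring]
    exact Real.mul_rpow hM.le (by positivity)
  have step1 : ∫ x : ℝ, phi γ p ω x ^ 2 =
      2 * ∫ z in Ioi (0:ℝ), M ^ α * ((1 / Real.cosh (a * z + b)) ^ 2) ^ α := by
    rw [show (∫ x : ℝ, phi γ p ω x ^ 2) =
        ∫ x : ℝ, (fun z : ℝ => M ^ α * ((1 / Real.cosh (a * z + b)) ^ 2) ^ α) |x| from by
      congr 1; funext x; exact hpt x]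
    exact integral_comp_abs (f := fun z : ℝ => M ^ α * ((1 / Real.cosh (a * z + b)) ^ 2) ^ α)
  -- change of variables
  have hmem' : ∀ t ∈ Ioo ξ 1, t ∈ Ioo (-1:ℝ) 1 := fun t ht => ⟨by linarith [ht.1], ht.2⟩
  have hξmem : ξ ∈ Ioo (-1:ℝ) 1 := ⟨by linarith, hξ1⟩
  have hderiv : ∀ t ∈ Ioo ξ 1,
      HasDerivWithinAt (fun t => (artanh t - b) / a) (1 / (1 - t ^ 2) / a) (Ioo ξ 1) t := by
    intro t ht
    exact (((artanh_hasDerivAt (hmem' t ht).1 ht.2).sub_const b).div_const a).hasDerivWithinAt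
  have hinj : InjOn (fun t => (artanh t - b) / a) (Ioo ξ 1) := by
    intro x hx y hy hxy
    have : artanh x = artanh y := by
      field_simp [ha.ne'] at hxy; linarith
    exact artanh_strictMonoOn.injOn (hmem' x hx) (hmem' y hy) this
  have himg : (fun t => (artanh t - b) / a) '' Ioo ξ 1 = Ioi (0:ℝ) := by
    ext x
    constructor
    · rintro ⟨t, ht, rfl⟩
      have : b < artanh t := artanh_strictMonoOn hξmem (hmem' t ht) ht.1
      exact div_pos (by linarith) ha
    · intro hx
      have hx' : (0:ℝ) < x := hx
      obtain ⟨hmem, heq⟩ := artanh_mem_and_eq (a * x + b)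
      set T : ℝ := (Real.exp (2*(a*x+b)) - 1)/(Real.exp (2*(a*x+b)) + 1) with hT_def
      refine ⟨T, ⟨?_, hmem.2⟩, ?_⟩
      · by_contra hcon
        push_neg at hcon
        have hlt : artanh T ≤ artanh ξ := by
          rcases hcon.lt_or_eq with h | h
          · exact (artanh_strictMonoOn hmem hξmem h).le
          · rw [h]
        rw [heq] at hlt
        nlinarith
      · show (artanh T - b) / a = x
        rw [heq]; field_simp; ring
  have step2 : (∫ z in Ioi (0:ℝ), M ^ α * ((1 / Real.cosh (a * z + b)) ^ 2) ^ α) =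
      ∫ t in Ioo ξ 1, M ^ α / a * hfun p t := by
    rw [← himg, integral_image_eq_integral_abs_deriv_smul measurableSet_Ioo hderiv hinj]
    apply setIntegral_congr_fun measurableSet_Ioo
    intro t ht
    have h1 : (-1:ℝ) < t := (hmem' t ht).1
    have h2 : t < 1 := ht.2
    have h1t : (0:ℝ) < 1 - t ^ 2 := by nlinarith
    have harg : a * ((artanh t - b) / a) + b = artanh t := by field_simp; ring
    simp only [smul_eq_mul, harg]
    rw [cosh_artanh h1 h2, abs_of_pos (by positivity)]
    unfold hfun
    rw [show (2 / (p - 1) - 1 : ℝ) = α - 1 from by rw [hα_def],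
      Real.rpow_sub_one h1t.ne' α]
    field_simp
  have step3 : (∫ t in Ioo ξ 1, M ^ α / a * hfun p t) = M ^ α / a * Ffun p ξ := by
    rw [MeasureTheory.integral_const_mul]
    congr 1
    rw [Ffun, intervalIntegral.integral_of_le hξ1.le, MeasureTheory.integral_Ioc_eq_integral_Ioo]
  rw [step1, step2, step3]
  -- constants
  have hMα : M ^ α = ((p + 1) / 2) ^ α * ω ^ α := by
    rw [hM_def, show (p + 1) * ω / 2 = (p + 1) / 2 * ω from by ring,
      Real.mul_rpow (by positivity) hω0.le]
  have hrs : ω ^ α / Real.sqrt ω = ω ^ (α - 1 / 2) := by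
    rw [Real.sqrt_eq_rpow, ← Real.rpow_sub hω0]
  rw [hMα, ha_def]
  rw [← hrs]
  field_simp
  ring


lemma Phi_hasDerivAt {γ p ω : ℝ} (hγ : 0 < γ) (hp : 5 < p) (hω : γ ^ 2 / 4 < ω) :
    HasDerivAt (fun ω' : ℝ =>
        4 / (p - 1) * ((p + 1) / 2) ^ (2 / (p - 1)) * ω' ^ (2 / (p - 1) - 1 / 2) *
          Ffun p (γ / (2 * Real.sqrt ω')))
      (-(4 / (p - 1) * ((p + 1) / 2) ^ (2 / (p - 1)) / 2) * ω ^ (2 / (p - 1) - 1 / 2 - 1) *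
        Gfun p (γ / (2 * Real.sqrt ω))) ω := by
  have hω0 : 0 < ω := lt_trans (by positivity) hω
  have hs : 0 < Real.sqrt ω := Real.sqrt_pos.2 hω0
  have hs2 : Real.sqrt ω ^ 2 = ω := Real.sq_sqrt hω0.le
  have hp1 : (0:ℝ) < p - 1 := by linarith
  have hγs : γ / 2 < Real.sqrt ω := by
    rw [Real.lt_sqrt (by positivity)]; nlinarith
  have hξ0 : 0 < γ / (2 * Real.sqrt ω) := by positivity
  have hξ1 : γ / (2 * Real.sqrt ω) < 1 := by rw [div_lt_one (by positivity)]; linarith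
  have hsq : HasDerivAt (fun ω' : ℝ => 2 * Real.sqrt ω') (2 * (1 / (2 * Real.sqrt ω))) ω :=
    (Real.hasDerivAt_sqrt hω0.ne').const_mul 2
  have hξd : HasDerivAt (fun ω' : ℝ => γ / (2 * Real.sqrt ω'))
      ((0 * (2 * Real.sqrt ω) - γ * (2 * (1 / (2 * Real.sqrt ω)))) / (2 * Real.sqrt ω) ^ 2) ω :=
    (hasDerivAt_const ω γ).div hsq (by positivity)
  have hF : HasDerivAt (Ffun p) (-hfun p (γ / (2 * Real.sqrt ω))) (γ / (2 * Real.sqrt ω)) :=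
    Ffun_hasDerivAt (by linarith) (by linarith) hξ1
  have hcomp := hF.comp ω hξd
  have hrpow : HasDerivAt (fun ω' : ℝ => ω' ^ (2 / (p - 1) - 1 / 2))
      ((2 / (p - 1) - 1 / 2) * ω ^ (2 / (p - 1) - 1 / 2 - 1)) ω :=
    Real.hasDerivAt_rpow_const (Or.inl hω0.ne')
  have hmul := (hrpow.mul hcomp).const_mul (4 / (p - 1) * ((p + 1) / 2) ^ (2 / (p - 1)))
  simp only [Function.comp_def, Pi.mul_apply] at hmul
  have heq : (fun ω' : ℝ => 4 / (p - 1) * ((p + 1) / 2) ^ (2 / (p - 1)) *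
      (ω' ^ (2 / (p - 1) - 1 / 2) * Ffun p (γ / (2 * Real.sqrt ω')))) =
      (fun ω' : ℝ => 4 / (p - 1) * ((p + 1) / 2) ^ (2 / (p - 1)) * ω' ^ (2 / (p - 1) - 1 / 2) *
        Ffun p (γ / (2 * Real.sqrt ω'))) := by
    funext ω'; ring
  rw [heq] at hmul
  refine hmul.congr_deriv ?_
  have hW : ω ^ (2 / (p - 1) - 1 / 2 : ℝ) = ω ^ (2 / (p - 1) - 1 / 2 - 1 : ℝ) * ω := by
    rw [Real.rpow_sub_one hω0.ne']; field_simp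
  unfold Gfun
  rw [hW]
  generalize Ffun p (γ / (2 * Real.sqrt ω)) = F
  generalize hfun p (γ / (2 * Real.sqrt ω)) = h
  generalize ((p + 1) / 2 : ℝ) ^ (2 / (p - 1) : ℝ) = A
  generalize ω ^ (2 / (p - 1) - 1 / 2 - 1 : ℝ) = W
  generalize hsg : Real.sqrt ω = s
  rw [hsg] at hs2 hs
  rw [← hs2]
  have hsne : s ≠ 0 := hs.ne'
  field_simp
  ring

end S7

open S7 in
/-- the sign of `∂_ω ‖φ_ω‖_{L²}²`. -/
theorem stmt7 (γ p : ℝ) (hγ : 0 < γ) (hp : 5 < p)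
    (ξ0 : ℝ) (hξ0 : ξ0 ∈ Ioo (0:ℝ) 1)
    (hξ0eq : (p - 5) / (p - 1) * ∫ s in ξ0..1, (1 - s ^ 2) ^ (2 / (p - 1) - 1) =
      ξ0 * (1 - ξ0 ^ 2) ^ (2 / (p - 1) - 1)) :
    (∀ ω ∈ Ioi (γ ^ 2 / 4), DifferentiableAt ℝ (fun ω' => ∫ x : ℝ, phi γ p ω' x ^ 2) ω) ∧
    ∀ ω ∈ Ioi (γ ^ 2 / 4),
      (deriv (fun ω' => ∫ x : ℝ, phi γ p ω' x ^ 2) ω < 0 ↔ γ / (2 * Real.sqrt ω) < ξ0) ∧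
      (γ / (2 * Real.sqrt ω) < ξ0 ↔ γ ^ 2 / (4 * ξ0 ^ 2) < ω) := by
  have hG0 : Gfun p ξ0 = 0 := by
    simp only [Gfun, Ffun, hfun]
    linarith [hξ0eq]
  have key : ∀ ω ∈ Ioi (γ ^ 2 / 4),
      HasDerivAt (fun ω' => ∫ x : ℝ, phi γ p ω' x ^ 2)
        (-(4 / (p - 1) * ((p + 1) / 2) ^ (2 / (p - 1)) / 2) * ω ^ (2 / (p - 1) - 1 / 2 - 1) *
          Gfun p (γ / (2 * Real.sqrt ω))) ω := by
    intro ω hω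
    have hev : (fun ω' => ∫ x : ℝ, phi γ p ω' x ^ 2) =ᶠ[nhds ω]
        (fun ω' : ℝ => 4 / (p - 1) * ((p + 1) / 2) ^ (2 / (p - 1)) * ω' ^ (2 / (p - 1) - 1 / 2) *
          Ffun p (γ / (2 * Real.sqrt ω'))) := by
      filter_upwards [isOpen_Ioi.mem_nhds hω] with ω' hω'
      exact integral_phi_sq hγ hp hω'
    exact (Phi_hasDerivAt hγ hp hω).congr_of_eventuallyEq hev
  refine ⟨fun ω hω => (key ω hω).differentiableAt, fun ω hω => ?_⟩
  have hω' : γ ^ 2 / 4 < ω := hω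
  have hω0 : 0 < ω := lt_trans (by positivity) hω'
  have hs : 0 < Real.sqrt ω := Real.sqrt_pos.2 hω0
  have hs2 : Real.sqrt ω ^ 2 = ω := Real.sq_sqrt hω0.le
  have hp1 : (0:ℝ) < p - 1 := by linarith
  have hγs : γ / 2 < Real.sqrt ω := by rw [Real.lt_sqrt (by positivity)]; nlinarith
  have hξω0 : 0 < γ / (2 * Real.sqrt ω) := by positivity
  have hξω1 : γ / (2 * Real.sqrt ω) < 1 := by rw [div_lt_one (by positivity)]; linarith
  constructor
  · rw [(key ω hω).deriv]
    have h1 : (0:ℝ) < ((p + 1) / 2) ^ (2 / (p - 1) : ℝ) := Real.rpow_pos_of_pos (by linarith) _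
    have h2 : (0:ℝ) < ω ^ (2 / (p - 1) - 1 / 2 - 1 : ℝ) := Real.rpow_pos_of_pos hω0 _
    have hK : 0 < 4 / (p - 1) * ((p + 1) / 2) ^ (2 / (p - 1) : ℝ) / 2 *
        ω ^ (2 / (p - 1) - 1 / 2 - 1 : ℝ) := by positivity
    have hiff : 0 < Gfun p (γ / (2 * Real.sqrt ω)) ↔ γ / (2 * Real.sqrt ω) < ξ0 := by
      rw [← hG0]
      exact (Gfun_strictAntiOn hp).lt_iff_gt hξ0 ⟨hξω0, hξω1⟩
    rw [← hiff]
    constructor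
    · intro h; nlinarith
    · intro h; nlinarith
  · constructor
    · intro h
      rw [div_lt_iff₀ (by have := hξ0.1; positivity : (0:ℝ) < 4 * ξ0 ^ 2)]
      rw [div_lt_iff₀ (by positivity : (0:ℝ) < 2 * Real.sqrt ω)] at h
      nlinarith [hξ0.1]
    · intro h
      rw [div_lt_iff₀ (by have := hξ0.1; positivity : (0:ℝ) < 4 * ξ0 ^ 2)] at h
      rw [div_lt_iff₀ (by positivity : (0:ℝ) < 2 * Real.sqrt ω)]
      nlinarith [hξ0.1, hξ0.2, mul_pos hξ0.1 hs]
end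
end

section
/- Let γ > 0 and p > 5, and let v ∈ H¹(ℝ) satisfy E(v) > 0 and v(0) ≠ 0. Then there exist 0 < λ₁ < λ₂ < λ₃ < λ₄ such that the function g(λ) = E(v^λ) on (0,∞) satisfies: g is strictly decreasing on (0,λ₁) and on (λ₃,∞) and strictly increasing on (λ₁,λ₃); g(λ) < 0 for λ ∈ (0,λ₂) ∪ (λ₄,∞) and g(λ) > 0 for λ ∈ (λ₂,λ₄); and g(λ) < g(λ₃) for all λ ∈ (0,λ₃) ∪ (λ₃,∞). -/
open MeasureTheory Set
open scoped ENNReal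

noncomputable section

section Stmt8Aux

lemma calc_main (a b c q : ℝ) (ha : 0 < a) (hb : 0 < b) (hc : 0 < c) (hq : 2 < q)
    (h1 : 0 < a - b - c) :
    ∃ l1 l2 l3 l4 : ℝ, 0 < l1 ∧ l1 < l2 ∧ l2 < l3 ∧ l3 < l4 ∧
      StrictAntiOn (fun l : ℝ => a * l ^ 2 - b * l - c * l ^ q) (Ioo 0 l1) ∧
      StrictAntiOn (fun l : ℝ => a * l ^ 2 - b * l - c * l ^ q) (Ioi l3) ∧
      StrictMonoOn (fun l : ℝ => a * l ^ 2 - b * l - c * l ^ q) (Ioo l1 l3) ∧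
      (∀ l ∈ Ioo (0:ℝ) l2 ∪ Ioi l4, a * l ^ 2 - b * l - c * l ^ q < 0) ∧
      (∀ l ∈ Ioo l2 l4, 0 < a * l ^ 2 - b * l - c * l ^ q) ∧
      (∀ l ∈ Ioi (0:ℝ), l ≠ l3 →
        a * l ^ 2 - b * l - c * l ^ q < a * l3 ^ 2 - b * l3 - c * l3 ^ q) := by
  set G : ℝ → ℝ := fun l => a * l ^ 2 - b * l - c * l ^ q with hGdef
  set φ : ℝ → ℝ := fun l => 2 * a * l - b - c * q * l ^ (q - 1) with hφdef
  have hq0 : (0:ℝ) < q := by linarith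
  have hq1 : (0:ℝ) < q - 1 := by linarith
  have hq2 : (0:ℝ) < q - 2 := by linarith
  -- continuity helper
  have hrpowc : ∀ e : ℝ, 0 < e → ∀ x : ℝ, ContinuousAt (fun l : ℝ => l ^ e) x := by
    intro e he x
    exact Real.continuousAt_rpow_const _ _ (Or.inr he.le)
  have hGcont : ContinuousOn G (Ici (0:ℝ)) := by
    intro x _
    exact ContinuousAt.continuousWithinAt (by
      have h1' : ContinuousAt (fun l : ℝ => a * l ^ 2 - b * l) x := by fun_prop
      exact h1'.sub ((continuousAt_const).mul (hrpowc q hq0 x)))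
  have hφcont : ContinuousOn φ (Ici (0:ℝ)) := by
    intro x _
    exact ContinuousAt.continuousWithinAt (by
      have h1' : ContinuousAt (fun l : ℝ => 2 * a * l - b) x := by fun_prop
      exact h1'.sub ((continuousAt_const).mul (hrpowc (q-1) hq1 x)))
  have hG0 : G 0 = 0 := by
    simp [hGdef, Real.zero_rpow (ne_of_gt hq0)]
  have hG1 : G 1 = a - b - c := by
    simp [hGdef, Real.one_rpow]
  have hφ0 : φ 0 = -b := by
    simp [hφdef, Real.zero_rpow (ne_of_gt hq1)]
  have hG' : ∀ l : ℝ, l ≠ 0 → HasDerivAt G (φ l) l := by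
    intro l hl
    have h1' : HasDerivAt (fun l : ℝ => a * l ^ 2) (a * (2 * l)) l := by
      simpa using (hasDerivAt_pow 2 l).const_mul a
    have h2' : HasDerivAt (fun l : ℝ => b * l) (b * 1) l := (hasDerivAt_id l).const_mul b
    have h3' : HasDerivAt (fun l : ℝ => c * l ^ q) (c * (q * l ^ (q - 1))) l :=
      (Real.hasDerivAt_rpow_const (Or.inl hl)).const_mul c
    have := (h1'.sub h2').sub h3'
    refine this.congr_deriv ?_
    simp only [hφdef]; ring
  have hφ' : ∀ l : ℝ, l ≠ 0 → HasDerivAt φ (2 * a - c * q * (q - 1) * l ^ (q - 2)) l := by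
    intro l hl
    have h1' : HasDerivAt (fun l : ℝ => 2 * a * l - b) (2 * a) l := by
      simpa using ((hasDerivAt_id l).const_mul (2*a)).sub_const b
    have h3' : HasDerivAt (fun l : ℝ => c * q * l ^ (q - 1)) (c * q * ((q-1) * l ^ (q - 1 - 1))) l :=
      (Real.hasDerivAt_rpow_const (Or.inl hl)).const_mul (c * q)
    have := h1'.sub h3'
    refine this.congr_deriv ?_
    ring_nf
  have hden : (0:ℝ) < c * q * (q - 1) := mul_pos (mul_pos hc hq0) hq1
  set lstar : ℝ := (2 * a / (c * q * (q - 1))) ^ (1 / (q - 2)) with hlstardef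
  have hX : (0:ℝ) < 2 * a / (c * q * (q - 1)) := div_pos (by linarith) hden
  have hlstar : 0 < lstar := by rw [hlstardef]; exact Real.rpow_pos_of_pos hX _
  have hlstar_pow : lstar ^ (q - 2) = 2 * a / (c * q * (q - 1)) := by
    rw [hlstardef, ← Real.rpow_mul hX.le]
    rw [show 1 / (q - 2) * (q - 2) = 1 by field_simp]
    exact Real.rpow_one _
  clear_value lstar
  -- φ strictly monotone on [0, lstar], strictly anti on [lstar, ∞)
  have hφmono : StrictMonoOn φ (Icc 0 lstar) := by
    apply strictMonoOn_of_deriv_pos (convex_Icc _ _) (hφcont.mono (Icc_subset_Ici_self))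
    rw [interior_Icc]
    intro l hl
    rw [(hφ' l (ne_of_gt hl.1)).deriv]
    have hlt : l ^ (q-2) < lstar ^ (q-2) := Real.rpow_lt_rpow hl.1.le hl.2 hq2
    rw [hlstar_pow] at hlt
    have := (mul_lt_mul_of_pos_left hlt hden)
    rw [mul_div_cancel₀ _ (ne_of_gt hden)] at this
    nlinarith
  have hφanti : StrictAntiOn φ (Ici lstar) := by
    apply strictAntiOn_of_deriv_neg (convex_Ici _)
      (hφcont.mono (fun x hx => le_trans hlstar.le hx))
    rw [interior_Ici]
    intro l hl
    have hl0 : 0 < l := lt_trans hlstar hl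
    rw [(hφ' l (ne_of_gt hl0)).deriv]
    have hlt : lstar ^ (q-2) < l ^ (q-2) := Real.rpow_lt_rpow hlstar.le hl hq2
    rw [hlstar_pow] at hlt
    have := (mul_lt_mul_of_pos_left hlt hden)
    rw [mul_div_cancel₀ _ (ne_of_gt hden)] at this
    nlinarith
  -- MVT gives a point with positive φ
  have hMVT : ∃ ξ ∈ Ioo (0:ℝ) 1, φ ξ = (G 1 - G 0) / (1 - 0) := by
    apply exists_hasDerivAt_eq_slope G φ (by norm_num)
      (hGcont.mono (fun x hx => hx.1))
    intro x hx
    exact hG' x (ne_of_gt hx.1)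
  obtain ⟨ξ, hξ, hφξ⟩ := hMVT
  have hφξpos : 0 < φ ξ := by
    rw [hφξ, hG0, hG1]; simp; linarith
  have hφlstar : 0 < φ lstar := by
    rcases le_total ξ lstar with h | h
    · have := hφmono.monotoneOn ⟨hξ.1.le, h⟩ ⟨hlstar.le, le_refl _⟩ h
      linarith
    · have := hφanti.antitoneOn (self_mem_Ici) h h
      linarith
  -- large R where φ < 0
  set Y : ℝ := (2 * a / (c * q) + 1) ^ (1 / (q - 2)) with hYdef
  have hcq : (0:ℝ) < c * q := mul_pos hc hq0
  have hY : 0 < Y := by rw [hYdef]; exact Real.rpow_pos_of_pos (by positivity) _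
  have hYpow : Y ^ (q - 2) = 2 * a / (c * q) + 1 := by
    rw [hYdef, ← Real.rpow_mul (by positivity)]
    rw [show 1 / (q - 2) * (q - 2) = 1 by field_simp]
    exact Real.rpow_one _
  clear_value Y
  set R : ℝ := lstar + Y with hRdef
  clear_value R
  have hR0 : 0 < R := by rw [hRdef]; positivity
  have hRpow : 2 * a / (c * q) + 1 ≤ R ^ (q - 2) := by
    rw [← hYpow]
    exact Real.rpow_le_rpow hY.le (by rw [hRdef]; linarith) hq2.le
  have hφR : φ R < 0 := by
    have hexp : R ^ (q - 1) = R ^ (q - 2) * R := by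
      rw [show q - 1 = (q - 2) + 1 by ring, Real.rpow_add hR0, Real.rpow_one]
    have h5 : 2 * a + c * q ≤ c * q * R ^ (q - 2) := by
      have : 2 * a + c * q = c * q * (2 * a / (c * q) + 1) := by field_simp
      rw [this]
      exact mul_le_mul_of_nonneg_left hRpow hcq.le
    have h6 := mul_le_mul_of_nonneg_right h5 hR0.le
    simp only [hφdef]
    rw [hexp]
    linarith [h6, mul_pos hcq hR0]
  have hlstarR : lstar < R := by rw [hRdef]; linarith
  -- first zero l1 of φ
  obtain ⟨l1, hl1mem, hl1⟩ : ∃ l1 ∈ Ioo (0:ℝ) lstar, φ l1 = 0 := by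
    have h := intermediate_value_Ioo hlstar.le (hφcont.mono (Icc_subset_Ici_self))
    have h0 : (0:ℝ) ∈ Ioo (φ 0) (φ lstar) := by rw [hφ0]; exact ⟨by linarith, hφlstar⟩
    obtain ⟨l1, hm, he⟩ := h h0
    exact ⟨l1, hm, he⟩
  -- second zero l3 of φ
  obtain ⟨l3, hl3mem, hl3⟩ : ∃ l3 ∈ Ioo lstar R, φ l3 = 0 := by
    have h := intermediate_value_Ioo' hlstarR.le
      (hφcont.mono (fun x hx => le_trans hlstar.le hx.1))
    have h0 : (0:ℝ) ∈ Ioo (φ R) (φ lstar) := ⟨hφR, hφlstar⟩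
    obtain ⟨l3, hm, he⟩ := h h0
    exact ⟨l3, hm, he⟩
  have hl1pos : 0 < l1 := hl1mem.1
  have hl3pos : 0 < l3 := lt_trans hlstar hl3mem.1
  have hl1l3 : l1 < l3 := lt_trans hl1mem.2 hl3mem.1
  -- sign of φ
  have hφneg1 : ∀ l ∈ Ioo (0:ℝ) l1, φ l < 0 := by
    intro l hl
    have := hφmono ⟨hl.1.le, le_trans hl.2.le hl1mem.2.le⟩ ⟨hl1pos.le, hl1mem.2.le⟩ hl.2
    rw [hl1] at this; linarith
  have hφpos : ∀ l ∈ Ioo l1 l3, 0 < φ l := by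
    intro l hl
    rcases le_total l lstar with h | h
    · have := hφmono ⟨hl1pos.le, hl1mem.2.le⟩ ⟨(lt_trans hl1pos hl.1).le, h⟩ hl.1
      rw [hl1] at this; linarith
    · have := hφanti h hl3mem.1.le hl.2
      rw [hl3] at this; linarith
  have hφneg2 : ∀ l ∈ Ioi l3, φ l < 0 := by
    intro l hl
    have := hφanti hl3mem.1.le (le_trans hl3mem.1.le (le_of_lt hl)) hl
    rw [hl3] at this; linarith
  -- G monotonicity on closed intervals
  have hsub1 : Icc (0:ℝ) l1 ⊆ Ici (0:ℝ) := Icc_subset_Ici_self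
  have hGanti1 : StrictAntiOn G (Icc 0 l1) := by
    apply strictAntiOn_of_deriv_neg (convex_Icc _ _) (hGcont.mono hsub1)
    rw [interior_Icc]
    intro l hl
    rw [(hG' l (ne_of_gt hl.1)).deriv]
    exact hφneg1 l hl
  have hGmono : StrictMonoOn G (Icc l1 l3) := by
    apply strictMonoOn_of_deriv_pos (convex_Icc _ _)
      (hGcont.mono (fun x hx => le_trans hl1pos.le hx.1))
    rw [interior_Icc]
    intro l hl
    rw [(hG' l (ne_of_gt (lt_trans hl1pos hl.1))).deriv]
    exact hφpos l hl
  have hGanti2 : StrictAntiOn G (Ici l3) := by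
    apply strictAntiOn_of_deriv_neg (convex_Ici _)
      (hGcont.mono (fun x hx => le_trans hl3pos.le hx))
    rw [interior_Ici]
    intro l hl
    rw [(hG' l (ne_of_gt (lt_trans hl3pos hl))).deriv]
    exact hφneg2 l hl
  -- G values
  have hGneg : ∀ l ∈ Ioc (0:ℝ) l1, G l < 0 := by
    intro l hl
    have := hGanti1 ⟨le_refl _, hl1pos.le⟩ ⟨hl.1.le, hl.2⟩ hl.1
    rw [hG0] at this; linarith
  have h1l1 : l1 < 1 := by
    by_contra h
    push_neg at h
    have := hGneg 1 ⟨one_pos, h⟩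
    rw [hG1] at this; linarith
  have hGl3 : 0 < G l3 := by
    rcases le_or_gt 1 l3 with h | h
    · rcases eq_or_lt_of_le h with h' | h'
      · rw [← h', hG1]; linarith
      · have := hGmono ⟨h1l1.le, h⟩ ⟨hl1l3.le, le_refl _⟩ h'
        rw [hG1] at this; linarith
    · have := hGanti2 self_mem_Ici h.le h
      rw [hG1] at this; linarith
  have hGl1 : G l1 < 0 := hGneg l1 ⟨hl1pos, le_refl _⟩
  -- zero l2 of G in (l1, l3)
  obtain ⟨l2, hl2mem, hl2⟩ : ∃ l2 ∈ Ioo l1 l3, G l2 = 0 := by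
    have h := intermediate_value_Ioo hl1l3.le
      (hGcont.mono (fun x hx => le_trans hl1pos.le hx.1))
    obtain ⟨l2, hm, he⟩ := h ⟨hGl1, hGl3⟩
    exact ⟨l2, hm, he⟩
  -- large R' where G < 0
  set Z : ℝ := (a / c + 1) ^ (1 / (q - 2)) with hZdef
  have hZ : 0 < Z := by rw [hZdef]; exact Real.rpow_pos_of_pos (by positivity) _
  have hZpow : Z ^ (q - 2) = a / c + 1 := by
    rw [hZdef, ← Real.rpow_mul (by positivity)]
    rw [show 1 / (q - 2) * (q - 2) = 1 by field_simp]
    exact Real.rpow_one _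
  clear_value Z
  set R' : ℝ := l3 + Z with hR'def
  clear_value R'
  have hR'3 : l3 < R' := by rw [hR'def]; linarith
  have hR'0 : 0 < R' := lt_trans hl3pos hR'3
  have hR'pow : a / c + 1 ≤ R' ^ (q - 2) := by
    rw [← hZpow]
    exact Real.rpow_le_rpow hZ.le (by rw [hR'def]; linarith) hq2.le
  have hGR' : G R' < 0 := by
    have hexp : R' ^ q = R' ^ (q - 2) * R' ^ 2 := by
      have h := Real.rpow_add hR'0 (q - 2) 2
      rw [show q - 2 + 2 = q by ring] at h
      rw [h]
      congr 1
      exact_mod_cast Real.rpow_natCast R' 2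
    have h5 : a + c ≤ c * R' ^ (q - 2) := by
      have : a + c = c * (a / c + 1) := by field_simp
      rw [this]
      exact mul_le_mul_of_nonneg_left hR'pow hc.le
    have h6 := mul_le_mul_of_nonneg_right h5 (sq_nonneg R')
    simp only [hGdef]
    rw [hexp]
    linarith [h6, mul_pos hb hR'0, mul_pos hc (pow_pos hR'0 2)]
  -- zero l4 of G in (l3, R')
  obtain ⟨l4, hl4mem, hl4⟩ : ∃ l4 ∈ Ioo l3 R', G l4 = 0 := by
    have h := intermediate_value_Ioo' hR'3.le
      (hGcont.mono (fun x hx => le_trans hl3pos.le hx.1))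
    obtain ⟨l4, hm, he⟩ := h ⟨hGR', hGl3⟩
    exact ⟨l4, hm, he⟩
  have hl1l2 : l1 < l2 := hl2mem.1
  have hl2l3 : l2 < l3 := hl2mem.2
  have hl3l4 : l3 < l4 := hl4mem.1
  refine ⟨l1, l2, l3, l4, hl1pos, hl1l2, hl2l3, hl3l4, ?_, ?_, ?_, ?_, ?_, ?_⟩
  · exact hGanti1.mono Ioo_subset_Icc_self
  · exact hGanti2.mono Ioi_subset_Ici_self
  · exact hGmono.mono Ioo_subset_Icc_self
  · intro l hl
    rcases hl with hl | hl
    · rcases le_or_gt l l1 with h | h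
      · exact hGneg l ⟨hl.1, h⟩
      · have := hGmono ⟨h.le, le_trans hl.2.le hl2l3.le⟩ ⟨hl1l2.le, hl2l3.le⟩ hl.2
        rw [hl2] at this; exact this
    · have := hGanti2 hl4mem.1.le (le_trans hl4mem.1.le (le_of_lt hl)) hl
      rw [hl4] at this; exact this
  · intro l hl
    rcases le_or_gt l l3 with h | h
    · have := hGmono ⟨hl1l2.le, hl2l3.le⟩ ⟨le_trans hl1l2.le hl.1.le, h⟩ hl.1
      rw [hl2] at this; exact this
    · have := hGanti2 h.le hl4mem.1.le hl.2
      rw [hl4] at this; exact this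
  · intro l hl hne
    show G l < G l3
    rcases lt_or_gt_of_ne hne with h | h
    · rcases le_or_gt l l1 with h' | h'
      · have := hGneg l ⟨hl, h'⟩
        linarith [hGl3]
      · exact hGmono ⟨h'.le, h.le⟩ ⟨hl1l3.le, le_refl _⟩ h
    · exact hGanti2 self_mem_Ici h.le h



lemma sq_norm_integrable {E : Type*} [NormedAddCommGroup E] {f : ℝ → E}
    (hf : MemLp f 2 volume) : Integrable (fun x => ‖f x‖ ^ 2) := by
  have h := hf.integrable_norm_rpow (by norm_num) (by norm_num)
  have h2 : ∀ x : ℝ, ‖f x‖ ^ ((2:ℝ≥0∞).toReal) = ‖f x‖ ^ 2 := by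
    intro x
    rw [ENNReal.toReal_ofNat]
    exact_mod_cast Real.rpow_natCast ‖f x‖ 2
  simpa [h2] using h

lemma l2_intervalIntegrable {E : Type*} [NormedAddCommGroup E] {f : ℝ → E}
    (hf : MemLp f 2 volume) (a b : ℝ) : IntervalIntegrable f volume a b := by
  rw [intervalIntegrable_iff]
  have h1 : MemLp f 2 (volume.restrict (Set.uIoc a b)) := hf.restrict _
  haveI : Fact ((volume : Measure ℝ) (Set.uIoc a b) < ⊤) :=
    ⟨measure_Ioc_lt_top⟩
  have h2 := h1.mono_exponent (p := 1) one_le_two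
  exact memLp_one_iff_integrable.mp h2

lemma bounded_of_memH1X' {v : ℝ → ℂ} (hv : MemH1 v) : ∃ M : ℝ, ∀ x, ‖v x‖ ≤ M := by
  obtain ⟨hc, hv2, hd2, hrep⟩ := hv
  have hI2 : Integrable (fun t : ℝ => ‖v t‖ ^ 2) := sq_norm_integrable hv2
  have hD2 : Integrable (fun t : ℝ => ‖deriv v t‖ ^ 2) := sq_norm_integrable hd2
  set I2 : ℝ := ∫ t : ℝ, ‖v t‖ ^ 2 with hI2def
  set D2 : ℝ := ∫ t : ℝ, ‖deriv v t‖ ^ 2 with hD2def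
  refine ⟨Real.sqrt I2 + (1 + D2) / 2, fun x => ?_⟩
  have hcont : Continuous fun y : ℝ => ‖v y‖ ^ 2 := by fun_prop
  obtain ⟨y, hy, hymin⟩ := (isCompact_Icc (a := x) (b := x + 1)).exists_isMinOn
      (by exact ⟨x, by simp⟩ : (Set.Icc x (x+1)).Nonempty) hcont.continuousOn
  have hxy : x ≤ y := hy.1
  have hy1 : y ≤ x + 1 := hy.2
  have hy2 : ‖v y‖ ^ 2 ≤ I2 := by
    by_contra hlt
    push_neg at hlt
    have h1 : (∫ _ : ℝ in x..(x+1), ‖v y‖ ^ 2) ≤ ∫ t in x..(x+1), ‖v t‖ ^ 2 :=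
      intervalIntegral.integral_mono_on (by linarith) intervalIntegrable_const
        hI2.intervalIntegrable (fun t ht => hymin ht)
    have h2 : (∫ t in x..(x+1), ‖v t‖ ^ 2) ≤ I2 := by
      rw [intervalIntegral.integral_of_le (by linarith : x ≤ x + 1)]
      exact setIntegral_le_integral hI2 (Filter.Eventually.of_forall fun t => by positivity)
    rw [intervalIntegral.integral_const] at h1
    simp only [add_sub_cancel_left, one_smul] at h1
    linarith
  have hvy : ‖v y‖ ≤ Real.sqrt I2 := by
    have h := Real.sqrt_le_sqrt hy2
    rwa [Real.sqrt_sq (norm_nonneg _)] at h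
  have hloc : ∀ a b : ℝ, IntervalIntegrable (deriv v) volume a b :=
    fun a b => l2_intervalIntegrable hd2 a b
  have hdiffrep : v y - v x = ∫ t in x..y, deriv v t := by
    rw [hrep y, hrep x]
    rw [← intervalIntegral.integral_interval_sub_left (hloc 0 y) (hloc 0 x)]
    ring
  have hbd : ‖v y - v x‖ ≤ (1 + D2) / 2 := by
    rw [hdiffrep]
    have h3 : ‖∫ t in x..y, deriv v t‖ ≤ ∫ t in x..y, ‖deriv v t‖ :=
      intervalIntegral.norm_integral_le_integral_norm hxy
    have h4 : (∫ t in x..y, ‖deriv v t‖) ≤ ∫ t in x..y, (1 + ‖deriv v t‖ ^ 2) / 2 :=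
      intervalIntegral.integral_mono_on hxy (hloc x y).norm
        (((intervalIntegrable_const (c := (1:ℝ))).add hD2.intervalIntegrable).div_const 2)
        (fun t _ => by nlinarith [sq_nonneg (1 - ‖deriv v t‖), norm_nonneg (deriv v t)])
    have h5 : (∫ t in x..y, (1 + ‖deriv v t‖ ^ 2) / 2)
        = ((y - x) + ∫ t in x..y, ‖deriv v t‖ ^ 2) / 2 := by
      rw [intervalIntegral.integral_div,
        intervalIntegral.integral_add intervalIntegrable_const hD2.intervalIntegrable,
        intervalIntegral.integral_const]
      simp [smul_eq_mul]
    have h6 : (∫ t in x..y, ‖deriv v t‖ ^ 2) ≤ D2 := by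
      rw [intervalIntegral.integral_of_le hxy]
      exact setIntegral_le_integral hD2 (Filter.Eventually.of_forall fun t => by positivity)
    calc ‖∫ t in x..y, deriv v t‖ ≤ _ := h3
      _ ≤ _ := h4
      _ = _ := h5
      _ ≤ (1 + D2) / 2 := by linarith
  calc ‖v x‖ = ‖v y - (v y - v x)‖ := by rw [sub_sub_cancel]
    _ ≤ ‖v y‖ + ‖v y - v x‖ := norm_sub_le _ _
    _ ≤ Real.sqrt I2 + (1 + D2) / 2 := add_le_add hvy hbd

lemma lpPow_integrable'X {v : ℝ → ℂ} (hv : MemH1 v) {p : ℝ} (hp : 1 < p) :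
    Integrable (fun x : ℝ => ‖v x‖ ^ (p + 1)) := by
  obtain ⟨M, hM⟩ := bounded_of_memH1X' hv
  obtain ⟨hc, hv2, -, -⟩ := hv
  set M' := max M 1 with hM'def
  have hM'1 : (1:ℝ) ≤ M' := le_max_right _ _
  have hI2 : Integrable (fun t : ℝ => ‖v t‖ ^ 2) := sq_norm_integrable hv2
  refine Integrable.mono' (hI2.const_mul (M' ^ (p - 1))) ?_ ?_
  · exact ((hc.norm).rpow_const (fun x => Or.inr (by linarith))).aestronglyMeasurable
  · refine Filter.Eventually.of_forall fun x => ?_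
    rw [Real.norm_eq_abs, abs_of_nonneg (Real.rpow_nonneg (norm_nonneg _) _)]
    have hsplit : ‖v x‖ ^ (p + 1) = ‖v x‖ ^ (p - 1) * ‖v x‖ ^ (2:ℝ) := by
      rw [← Real.rpow_add' (norm_nonneg _) (by intro h; linarith)]
      congr 1
      ring
    have h2 : ‖v x‖ ^ (2:ℝ) = ‖v x‖ ^ (2:ℕ) := by
      exact_mod_cast Real.rpow_natCast ‖v x‖ 2
    rw [hsplit, h2]
    have h1 : ‖v x‖ ^ (p - 1) ≤ M' ^ (p - 1) :=
      Real.rpow_le_rpow (norm_nonneg _) (le_trans (hM x) (le_max_left _ _)) (by linarith)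
    exact mul_le_mul_of_nonneg_right h1 (by positivity)

lemma lpPow_pos'X {v : ℝ → ℂ} (hv : MemH1 v) {p : ℝ} (hp : 1 < p) (hv0 : v 0 ≠ 0) :
    0 < ∫ x : ℝ, ‖v x‖ ^ (p + 1) := by
  have hint := lpPow_integrable'X hv hp
  have hnn : 0 ≤ fun x : ℝ => ‖v x‖ ^ (p + 1) :=
    fun x => Real.rpow_nonneg (norm_nonneg _) _
  rw [integral_pos_iff_support_of_nonneg hnn hint]
  have hU : IsOpen (v ⁻¹' {0}ᶜ) := isOpen_compl_singleton.preimage hv.1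
  have hsub : v ⁻¹' {0}ᶜ ⊆ Function.support fun x : ℝ => ‖v x‖ ^ (p + 1) := by
    intro x hx
    have hx' : v x ≠ 0 := hx
    have : (0:ℝ) < ‖v x‖ := norm_pos_iff.mpr hx'
    exact ne_of_gt (Real.rpow_pos_of_pos this _)
  calc (0:ℝ≥0∞) < volume (v ⁻¹' {0}ᶜ) := hU.measure_pos volume ⟨0, hv0⟩
    _ ≤ _ := measure_mono hsub


lemma deriv_scale {l : ℝ} (hl : 0 < l) (v : ℝ → ℂ) (x : ℝ) :
    deriv (scale l v) x = ((Real.sqrt l * l : ℝ) : ℂ) * deriv v (l * x) := by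
  have hs0 : (Real.sqrt l : ℂ) ≠ 0 := by
    simp only [ne_eq, Complex.ofReal_eq_zero]
    exact Real.sqrt_ne_zero'.mpr hl
  by_cases hdiff : DifferentiableAt ℝ v (l * x)
  · have hinner : HasDerivAt (fun x : ℝ => l * x) l x := by
      simpa using (hasDerivAt_id x).const_mul l
    have h1 : HasDerivAt (fun y : ℝ => v (l * y)) (l • deriv v (l * x)) x :=
      HasDerivAt.scomp x hdiff.hasDerivAt hinner
    have h2 : HasDerivAt (scale l v) ((Real.sqrt l : ℂ) * (l • deriv v (l * x))) x :=
      h1.const_mul _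
    rw [h2.deriv, Complex.real_smul]
    push_cast
    ring
  · have hni : ¬ DifferentiableAt ℝ (scale l v) x := by
      intro h
      apply hdiff
      have hinner : DifferentiableAt ℝ (fun y : ℝ => l⁻¹ * y) (l * x) :=
        (differentiableAt_id.const_mul _)
    
      have hpt : DifferentiableAt ℝ (scale l v) (l⁻¹ * (l * x)) := by
        rwa [inv_mul_cancel_left₀ (ne_of_gt hl)]
      have hcomp : DifferentiableAt ℝ (scale l v ∘ fun y : ℝ => l⁻¹ * y) (l * x) :=
        DifferentiableAt.comp _ hpt hinner
      have hcomp2 : DifferentiableAt ℝ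
          (fun y : ℝ => (Real.sqrt l : ℂ)⁻¹ * (scale l v (l⁻¹ * y))) (l * x) :=
        hcomp.const_mul _
      have heq : (fun y : ℝ => (Real.sqrt l : ℂ)⁻¹ * (scale l v (l⁻¹ * y))) = v := by
        funext y
        simp only [scale]
        rw [mul_inv_cancel_left₀ (ne_of_gt hl), inv_mul_cancel_left₀ hs0]
      rwa [heq] at hcomp2
    rw [deriv_zero_of_not_differentiableAt hni, deriv_zero_of_not_differentiableAt hdiff,
      mul_zero]

lemma gradSq_scale {l : ℝ} (hl : 0 < l) (v : ℝ → ℂ) :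
    gradSq (scale l v) = l ^ 2 * gradSq v := by
  unfold gradSq
  have h1 : ∀ x : ℝ, ‖deriv (scale l v) x‖ ^ 2 = l ^ 3 * ‖deriv v (l * x)‖ ^ 2 := by
    intro x
    rw [deriv_scale hl v x, norm_mul]
    have hn : ‖((Real.sqrt l * l : ℝ) : ℂ)‖ = Real.sqrt l * l := by
      rw [Complex.norm_real, Real.norm_eq_abs]
      exact abs_of_nonneg (by positivity)
    rw [hn, mul_pow]
    have hsq : (Real.sqrt l * l) ^ 2 = l ^ 3 := by
      rw [mul_pow, Real.sq_sqrt hl.le]; ring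
    rw [hsq]
  simp_rw [h1]
  rw [MeasureTheory.integral_const_mul]
  rw [Measure.integral_comp_mul_left (fun y => ‖deriv v y‖ ^ 2) l]
  rw [smul_eq_mul, abs_of_pos (inv_pos.mpr hl)]
  field_simp

lemma lpPow_scale {l : ℝ} (hl : 0 < l) {p : ℝ} (hp : 1 < p) (v : ℝ → ℂ) :
    lpPow p (scale l v) = l ^ ((p - 1) / 2) * lpPow p v := by
  unfold lpPow scale
  have h1 : ∀ x : ℝ, ‖(Real.sqrt l : ℂ) * v (l * x)‖ ^ (p + 1)
      = l ^ ((p + 1) / 2) * ‖v (l * x)‖ ^ (p + 1) := by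
    intro x
    rw [norm_mul, Complex.norm_real, Real.norm_eq_abs,
      abs_of_nonneg (Real.sqrt_nonneg l),
      Real.mul_rpow (Real.sqrt_nonneg l) (norm_nonneg _)]
    congr 1
    rw [Real.sqrt_eq_rpow, ← Real.rpow_mul hl.le]
    congr 1
    ring
  simp_rw [h1]
  rw [MeasureTheory.integral_const_mul]
  rw [Measure.integral_comp_mul_left (fun y => ‖v y‖ ^ (p + 1)) l]
  rw [smul_eq_mul, abs_of_pos (inv_pos.mpr hl), ← mul_assoc]
  congr 1
  rw [← Real.rpow_neg_one l, ← Real.rpow_add hl]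
  congr 1
  ring

lemma En_scale {l : ℝ} (hl : 0 < l) (γ p : ℝ) (hp : 1 < p) (v : ℝ → ℂ) :
    En γ p (scale l v) =
      gradSq v / 2 * l ^ 2 - γ * ‖v 0‖ ^ 2 / 2 * l - lpPow p v / (p + 1) * l ^ ((p - 1) / 2) := by
  unfold En
  rw [gradSq_scale hl, lpPow_scale hl hp]
  have h0 : ‖scale l v 0‖ ^ 2 = l * ‖v 0‖ ^ 2 := by
    simp only [scale, mul_zero, norm_mul, Complex.norm_real, Real.norm_eq_abs,
      abs_of_nonneg (Real.sqrt_nonneg l), mul_pow, Real.sq_sqrt hl.le]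
  rw [h0]
  ring

end Stmt8Aux

/-- the shape of `λ ↦ E(v^λ)` when `E(v) > 0` and `v(0) ≠ 0`. -/
theorem stmt8 (γ p : ℝ) (hγ : 0 < γ) (hp : 5 < p) (v : ℝ → ℂ)
    (hv : MemH1 v) (hE : 0 < En γ p v) (hv0 : v 0 ≠ 0) :
    ∃ l1 l2 l3 l4 : ℝ, 0 < l1 ∧ l1 < l2 ∧ l2 < l3 ∧ l3 < l4 ∧
      StrictAntiOn (fun l => En γ p (scale l v)) (Ioo 0 l1) ∧
      StrictAntiOn (fun l => En γ p (scale l v)) (Ioi l3) ∧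
      StrictMonoOn (fun l => En γ p (scale l v)) (Ioo l1 l3) ∧
      (∀ l ∈ Ioo (0:ℝ) l2 ∪ Ioi l4, En γ p (scale l v) < 0) ∧
      (∀ l ∈ Ioo l2 l4, 0 < En γ p (scale l v)) ∧
      (∀ l ∈ Ioi (0:ℝ), l ≠ l3 → En γ p (scale l v) < En γ p (scale l3 v)) := by
  have hp1 : (1:ℝ) < p := by linarith
  have hB0 : (0:ℝ) < ‖v 0‖ ^ 2 := by
    have : (0:ℝ) < ‖v 0‖ := norm_pos_iff.mpr hv0
    positivity
  have hC : 0 < lpPow p v := lpPow_pos'X hv hp1 hv0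
  have hb : (0:ℝ) < γ * ‖v 0‖ ^ 2 / 2 := by positivity
  have hcpos : (0:ℝ) < lpPow p v / (p + 1) := div_pos hC (by linarith)
  have h1 : 0 < gradSq v / 2 - γ * ‖v 0‖ ^ 2 / 2 - lpPow p v / (p + 1) := by
    have hEn : En γ p v = gradSq v / 2 - γ * ‖v 0‖ ^ 2 / 2 - lpPow p v / (p + 1) := by
      rw [En]; ring
    rw [← hEn]; exact hE
  have ha : (0:ℝ) < gradSq v / 2 := by linarith
  have hq : (2:ℝ) < (p - 1) / 2 := by linarith
  obtain ⟨l1, l2, l3, l4, h01, h12, h23, h34, hanti1, hanti2, hmono, hneg, hpos, hmax⟩ :=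
    calc_main (gradSq v / 2) (γ * ‖v 0‖ ^ 2 / 2) (lpPow p v / (p + 1)) ((p - 1) / 2)
      ha hb hcpos hq h1
  have hEq : ∀ l : ℝ, 0 < l → En γ p (scale l v) =
      (gradSq v / 2) * l ^ 2 - (γ * ‖v 0‖ ^ 2 / 2) * l
        - (lpPow p v / (p + 1)) * l ^ ((p - 1) / 2) := by
    intro l hl
    rw [En_scale hl γ p hp1 v]
  have hl2pos : 0 < l2 := lt_trans h01 h12
  have hl3pos : 0 < l3 := lt_trans hl2pos h23
  have hl4pos : 0 < l4 := lt_trans hl3pos h34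
  refine ⟨l1, l2, l3, l4, h01, h12, h23, h34, ?_, ?_, ?_, ?_, ?_, ?_⟩
  · intro x hx y hy hxy
    simp only
    rw [hEq x hx.1, hEq y hy.1]
    exact hanti1 hx hy hxy
  · intro x hx y hy hxy
    simp only
    rw [hEq x (lt_trans hl3pos hx), hEq y (lt_trans hl3pos hy)]
    exact hanti2 hx hy hxy
  · intro x hx y hy hxy
    simp only
    rw [hEq x (lt_trans h01 hx.1), hEq y (lt_trans h01 hy.1)]
    exact hmono hx hy hxy
  · intro l hl
    have hlpos : 0 < l := by
      rcases hl with hl | hl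
      · exact hl.1
      · exact lt_trans hl4pos hl
    rw [hEq l hlpos]
    exact hneg l hl
  · intro l hl
    rw [hEq l (lt_trans hl2pos hl.1)]
    exact hpos l hl
  · intro l hl hne
    rw [hEq l hl, hEq l3 hl3pos]
    exact hmax l hl hne
end
end

section
/- Let γ > 0, p > 5 and ω > γ²/4. If v ∈ H¹(ℝ), v ≠ 0, E(v) > 0, K_ω(v) < 0 and P(v) = 0, then d(ω) < S_ω(v). -/
open MeasureTheory Set
open scoped ENNReal

noncomputable section

lemma stmt9aux_deriv_comp_mul (l : ℝ) (hl : l ≠ 0) (v : ℝ → ℂ) (x : ℝ) :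
    deriv (fun y => v (l * y)) x = l * deriv v (l * x) := by
  by_cases h : DifferentiableAt ℝ v (l * x)
  · have h2 : HasDerivAt (fun y : ℝ => l * y) l x := by
      simpa using (hasDerivAt_id x).const_mul l
    have := (h.hasDerivAt.scomp x h2)
    simpa [mul_comm, Function.comp_def] using this.deriv
  · have h1 : ¬ DifferentiableAt ℝ (fun y => v (l * y)) x := by
      intro hc
      have h3 : DifferentiableAt ℝ (fun y : ℝ => l⁻¹ * y) (l * x) := by
        fun_prop
      have hc' : DifferentiableAt ℝ (fun y => v (l * y)) (l⁻¹ * (l * x)) := by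
        rwa [← mul_assoc, inv_mul_cancel₀ hl, one_mul]
      have h4 := hc'.comp (l * x) h3
      have : (fun y => v (l * (l⁻¹ * y))) = v := by
        funext y; rw [← mul_assoc, mul_inv_cancel₀ hl, one_mul]
      rw [Function.comp_def, this] at h4
      exact h h4
    rw [deriv_zero_of_not_differentiableAt h1, deriv_zero_of_not_differentiableAt h, mul_zero]

lemma stmt9aux_deriv_scale (l : ℝ) (hl : l ≠ 0) (v : ℝ → ℂ) (x : ℝ) :
    deriv (scale l v) x = ((Real.sqrt l * l : ℝ) : ℂ) * deriv v (l * x) := by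
  unfold scale
  rw [deriv_const_mul_field, stmt9aux_deriv_comp_mul l hl]
  push_cast
  ring

lemma stmt9aux_norm_sqrt_complex (l : ℝ) (hl : 0 < l) : ‖((Real.sqrt l : ℝ) : ℂ)‖ = Real.sqrt l := by
  rw [Complex.norm_real, Real.norm_eq_abs, abs_of_nonneg (Real.sqrt_nonneg l)]

lemma stmt9aux_l2Sq_scale (l : ℝ) (hl : 0 < l) (v : ℝ → ℂ) : l2Sq (scale l v) = l2Sq v := by
  unfold l2Sq scale
  have : ∀ x : ℝ, ‖((Real.sqrt l : ℝ) : ℂ) * v (l * x)‖ ^ 2 = l * ‖v (l * x)‖ ^ 2 := by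
    intro x
    rw [norm_mul, stmt9aux_norm_sqrt_complex l hl, mul_pow, Real.sq_sqrt hl.le]
  simp_rw [this]
  rw [MeasureTheory.integral_const_mul, Measure.integral_comp_mul_left (fun y => ‖v y‖ ^ 2) l,
    smul_eq_mul, abs_of_pos (inv_pos.2 hl), ← mul_assoc, mul_inv_cancel₀ hl.ne', one_mul]

lemma stmt9aux_gradSq_scale (l : ℝ) (hl : 0 < l) (v : ℝ → ℂ) :
    gradSq (scale l v) = l ^ 2 * gradSq v := by
  unfold gradSq
  have : ∀ x : ℝ, ‖deriv (scale l v) x‖ ^ 2 = l ^ 3 * ‖deriv v (l * x)‖ ^ 2 := by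
    intro x
    rw [stmt9aux_deriv_scale l hl.ne' v x, norm_mul, Complex.norm_real, Real.norm_eq_abs,
      abs_of_nonneg (by positivity), mul_pow]
    ring_nf
    rw [Real.sq_sqrt hl.le]
    ring
  simp_rw [this]
  rw [MeasureTheory.integral_const_mul, Measure.integral_comp_mul_left (fun y => ‖deriv v y‖ ^ 2) l,
    smul_eq_mul, abs_of_pos (inv_pos.2 hl)]
  field_simp

lemma stmt9aux_lpPow_scale (p l : ℝ) (hp : 0 < p) (hl : 0 < l) (v : ℝ → ℂ) :
    lpPow p (scale l v) = l ^ ((p - 1) / 2) * lpPow p v := by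
  unfold lpPow scale
  have : ∀ x : ℝ, ‖((Real.sqrt l : ℝ) : ℂ) * v (l * x)‖ ^ (p + 1)
      = l ^ ((p + 1) / 2) * ‖v (l * x)‖ ^ (p + 1) := by
    intro x
    rw [norm_mul, stmt9aux_norm_sqrt_complex l hl, Real.mul_rpow (Real.sqrt_nonneg l) (norm_nonneg _),
      Real.sqrt_eq_rpow, ← Real.rpow_mul hl.le]
    rw [show (1:ℝ)/2 * (p+1) = (p+1)/2 by ring]
  simp_rw [this]
  rw [MeasureTheory.integral_const_mul, Measure.integral_comp_mul_left (fun y => ‖v y‖ ^ (p+1)) l,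
    smul_eq_mul, abs_of_pos (inv_pos.2 hl), ← mul_assoc]
  congr 1
  rw [← Real.rpow_neg_one l, ← Real.rpow_add hl]
  congr 1
  ring

lemma stmt9aux_memLp_comp_mul (l : ℝ) (hl : 0 < l) (g : ℝ → ℂ) (hg : MemLp g 2 volume) :
    MemLp (fun x => g (l * x)) 2 volume := by
  have he : MeasurableEmbedding (fun x : ℝ => l * x) :=
    (Homeomorph.mulLeft₀ l hl.ne').measurableEmbedding
  have : MemLp g 2 (Measure.map (fun x : ℝ => l * x) volume) := by
    rw [Real.map_volume_mul_left hl.ne']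
    exact hg.smul_measure ENNReal.ofReal_ne_top
  exact (he.memLp_map_measure_iff).1 this

lemma stmt9aux_memH1_scale (l : ℝ) (hl : 0 < l) (v : ℝ → ℂ) (hv : MemH1 v) : MemH1 (scale l v) := by
  obtain ⟨hc, hl2, hd2, hftc⟩ := hv
  refine ⟨?_, ?_, ?_, ?_⟩
  · exact continuous_const.mul (hc.comp (continuous_const.mul continuous_id))
  · exact (stmt9aux_memLp_comp_mul l hl v hl2).const_mul _
  · have : deriv (scale l v) = fun x => ((Real.sqrt l * l : ℝ) : ℂ) * deriv v (l * x) :=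
      funext (stmt9aux_deriv_scale l hl.ne' v)
    rw [this]
    exact (stmt9aux_memLp_comp_mul l hl (deriv v) hd2).const_mul _
  · intro x
    have h1 : ∀ t : ℝ, deriv (scale l v) t = ((Real.sqrt l * l : ℝ) : ℂ) * deriv v (l * t) :=
      stmt9aux_deriv_scale l hl.ne' v
    rw [intervalIntegral.integral_congr (g := fun t => ((Real.sqrt l * l : ℝ) : ℂ) * deriv v (l * t))
        (fun t _ => h1 t),
      intervalIntegral.integral_const_mul,
      intervalIntegral.integral_comp_mul_left (fun t => deriv v t) hl.ne']
    have h2 := hftc (l * x)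
    have h3 : scale l v x = (Real.sqrt l : ℂ) * v (l * x) := rfl
    have h4 : scale l v 0 = (Real.sqrt l : ℂ) * v 0 := by
      show (Real.sqrt l : ℂ) * v (l * 0) = _
      rw [mul_zero]
    rw [h3, h4, h2, mul_zero, Complex.real_smul]
    push_cast
    have : (l : ℂ) ≠ 0 := by exact_mod_cast hl.ne'
    field_simp

lemma stmt9aux_l2Sq_pos (v : ℝ → ℂ) (hc : Continuous v) (h2 : MemLp v 2 volume) (hv0 : v ≠ 0) :
    0 < l2Sq v := by
  have hint : Integrable (fun x => ‖v x‖ ^ 2) volume := by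
    have := h2.integrable_norm_rpow two_ne_zero ENNReal.ofNat_ne_top
    simpa [ENNReal.toReal_ofNat, Real.rpow_natCast] using this
  unfold l2Sq
  rw [MeasureTheory.integral_pos_iff_support_of_nonneg (fun x => by positivity) hint]
  obtain ⟨x₀, hx₀⟩ := Function.ne_iff.1 hv0
  have hx₀' : v x₀ ≠ 0 := by simpa using hx₀
  have hopen : IsOpen {x : ℝ | v x ≠ 0} := isOpen_compl_singleton.preimage hc
  have hsub : {x : ℝ | v x ≠ 0} ⊆ Function.support fun x => ‖v x‖ ^ 2 := by
    intro x hx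
    simp only [Function.mem_support]
    exact pow_ne_zero _ (norm_ne_zero_iff.2 hx)
  exact lt_of_lt_of_le (hopen.measure_pos volume ⟨x₀, hx₀'⟩) (measure_mono hsub)

lemma stmt9aux_bern (Q lam : ℝ) (hQ : 2 < Q) (h0 : 0 < lam) (h1 : lam ≤ 1) :
    (Q - 1) * lam ^ 2 - (Q - 2) * lam ≤ lam ^ Q := by
  have h2 : (1:ℝ) + (Q - 1) * (lam - 1) ≤ lam ^ (Q - 1) := by
    have := one_add_mul_self_le_rpow_one_add (s := lam - 1) (by linarith) (p := Q - 1)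
      (by linarith)
    simpa using this
  have h3 : lam ^ Q = lam ^ (Q - 1) * lam := by
    rw [← Real.rpow_add_one h0.ne' (Q - 1)]
    norm_num
  rw [h3]
  have h4 := mul_le_mul_of_nonneg_right h2 h0.le
  linarith [h4]

lemma stmt9aux_core (p G Γ b lam t : ℝ) (hp : 5 < p) (hΓ : 0 ≤ Γ)
    (hP2 : (p + 1) * G = (p + 1) * Γ / 2 + (p - 1) * b / 2)
    (hE2 : Γ * (p + 1) < (p - 5) * b)
    (h0 : 0 ≤ lam) (h1 : lam < 1)
    (ht : (p - 3) / 2 * lam ^ 2 - (p - 5) / 2 * lam ≤ t) :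
    lam ^ 2 * G / 2 - lam * Γ / 2 - t * b / (p + 1) < G / 2 - Γ / 2 - b / (p + 1) := by
  have hp1 : (0:ℝ) < p + 1 := by linarith
  have hb : 0 < b := by
    by_contra hcon
    push_neg at hcon
    have h6 : (p - 5) * b ≤ 0 := mul_nonpos_of_nonneg_of_nonpos (by linarith) hcon
    have h7 : 0 ≤ Γ * (p + 1) := mul_nonneg hΓ (by linarith)
    linarith
  have h2p : (0:ℝ) < 2 * (p + 1) := by linarith
  rw [← mul_lt_mul_iff_right₀ h2p]
  have e1 : 2 * (p + 1) * (lam ^ 2 * G / 2 - lam * Γ / 2 - t * b / (p + 1))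
      = (p + 1) * (lam ^ 2 * G) - (p + 1) * (lam * Γ) - 2 * (t * b) := by
    field_simp
  have e2 : 2 * (p + 1) * (G / 2 - Γ / 2 - b / (p + 1))
      = (p + 1) * G - (p + 1) * Γ - 2 * b := by
    field_simp
  rw [e1, e2]
  have key : ((p + 1) * G - (p + 1) * Γ - 2 * b)
        - ((p + 1) * (lam ^ 2 * G) - (p + 1) * (lam * Γ) - 2 * (t * b))
      = (1 - lam) ^ 2 * ((p - 5) * b - (p + 1) * Γ) / 2
        + b * (2 * t - ((p - 3) * lam ^ 2 - (p - 5) * lam))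
        + (1 - lam ^ 2) * ((p + 1) * G - ((p + 1) * Γ / 2 + (p - 1) * b / 2)) := by
    ring
  have hz : (p + 1) * G - ((p + 1) * Γ / 2 + (p - 1) * b / 2) = 0 := by linarith
  have h1' : (0:ℝ) < 1 - lam := by linarith
  have t1 : 0 < (1 - lam) ^ 2 * ((p - 5) * b - (p + 1) * Γ) / 2 := by
    apply div_pos _ two_pos
    exact mul_pos (pow_pos h1' 2) (by linarith)
  have t2 : 0 ≤ b * (2 * t - ((p - 3) * lam ^ 2 - (p - 5) * lam)) := by
    apply mul_nonneg hb.le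
    linarith
  have hz2 : (1 - lam ^ 2) * ((p + 1) * G - ((p + 1) * Γ / 2 + (p - 1) * b / 2)) = 0 := by
    rw [hz]; ring
  linarith [key, hz2, t1, t2]

lemma stmt9aux_lpPow_nonneg (p : ℝ) (v : ℝ → ℂ) : 0 ≤ lpPow p v :=
  integral_nonneg fun x => Real.rpow_nonneg (norm_nonneg _) _

lemma stmt9aux_norm_scale_zero_sq (l : ℝ) (hl : 0 < l) (v : ℝ → ℂ) :
    ‖scale l v 0‖ ^ 2 = l * ‖v 0‖ ^ 2 := by
  show ‖(Real.sqrt l : ℂ) * v (l * 0)‖ ^ 2 = _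
  rw [mul_zero, norm_mul, stmt9aux_norm_sqrt_complex l hl, mul_pow, Real.sq_sqrt hl.le]

lemma stmt9aux_scale_ne_zero (l : ℝ) (hl : 0 < l) (v : ℝ → ℂ) (hv0 : v ≠ 0) : scale l v ≠ 0 := by
  obtain ⟨x₀, hx₀⟩ := Function.ne_iff.1 hv0
  have hx₀' : v x₀ ≠ 0 := by simpa using hx₀
  intro heq
  have h := congrFun heq (l⁻¹ * x₀)
  have h2 : (Real.sqrt l : ℂ) * v (l * (l⁻¹ * x₀)) = 0 := h
  rw [← mul_assoc, mul_inv_cancel₀ hl.ne', one_mul] at h2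
  rcases mul_eq_zero.1 h2 with h3 | h3
  · exact (Complex.ofReal_ne_zero.2 (Real.sqrt_ne_zero'.2 hl)) h3
  · exact hx₀' h3

set_option maxHeartbeats 1000000 in
/-- `d(ω) < S_ω(v)` for `v` with `E(v) > 0`, `K_ω(v) < 0`, `P(v) = 0`. -/
theorem stmt9 (γ p ω : ℝ) (hγ : 0 < γ) (hp : 5 < p) (hω : γ ^ 2 / 4 < ω)
    (v : ℝ → ℂ) (hv : MemH1 v) (hv0 : v ≠ 0)
    (hE : 0 < En γ p v) (hK : Kfun γ p ω v < 0) (hP : Pfun γ p v = 0) :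
    dInf γ p ω < Sfun γ p ω v := by
  have hω0 : 0 < ω := lt_of_le_of_lt (by positivity) hω
  have hp1 : (0:ℝ) < p + 1 := by linarith
  have hp0 : (0:ℝ) < p := by linarith
  unfold En at hE; unfold Kfun at hK; unfold Pfun at hP
  set n0 : ℝ := ‖v 0‖ ^ 2 with hn0_def
  set G : ℝ := gradSq v with hG_def
  set b : ℝ := lpPow p v with hb_def
  set l2 : ℝ := l2Sq v with hl2_def
  have hn0 : 0 ≤ n0 := by positivity
  have hΓ : 0 ≤ γ * n0 := by positivity
  have hG : 0 ≤ G := integral_nonneg fun x => by positivity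
  have hb0 : 0 ≤ b := stmt9aux_lpPow_nonneg p v
  have hl2 : 0 < l2 := stmt9aux_l2Sq_pos v hv.1 hv.2.1 hv0
  have hL : 0 < ω * l2 := mul_pos hω0 hl2
  set Γ : ℝ := γ * n0 with hΓ_def
  set L : ℝ := ω * l2 with hL_def
  -- derived algebraic facts
  have e0 : (p + 1) * ((p - 1) / (2 * (p + 1)) * b) = (p - 1) * b / 2 := by
    field_simp
  have hP2 : (p + 1) * G = (p + 1) * Γ / 2 + (p - 1) * b / 2 := by
    linear_combination (p + 1) * hP + e0
  have e3 : (2 * (p + 1)) * (G / 2 - γ / 2 * n0 - b / (p + 1))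
      = (p + 1) * G - (p + 1) * Γ - 2 * b := by
    field_simp; ring
  have hE'' : 0 < (p + 1) * G - (p + 1) * Γ - 2 * b := by
    have := mul_pos (show (0:ℝ) < 2 * (p + 1) by linarith) hE
    rwa [e3] at this
  have hE2 : Γ * (p + 1) < (p - 5) * b := by linarith
  have hbpos : 0 < b := by
    by_contra hcon
    push_neg at hcon
    have h6 : (p - 5) * b ≤ 0 := mul_nonpos_of_nonneg_of_nonpos (by linarith) hcon
    have h7 : 0 ≤ Γ * (p + 1) := mul_nonneg hΓ hp1.le
    linarith
  -- the function k
  set Q : ℝ := (p - 1) / 2 with hQ_def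
  have hQ : 2 < Q := by rw [hQ_def]; linarith
  set k : ℝ → ℝ := fun s => s ^ 2 * G + L - s * Γ - s ^ Q * b with hk_def
  set ls : ℝ := min (1/2) (L / (2 * (Γ + b + 1))) with hls_def
  have hden : (0:ℝ) < 2 * (Γ + b + 1) := by linarith
  have hls_pos : 0 < ls := lt_min (by norm_num) (div_pos hL hden)
  have hls_le1 : ls ≤ 1 := le_trans (min_le_left _ _) (by norm_num)
  have hcont : ContinuousOn k (Icc ls 1) := by
    have c1 : ContinuousOn (fun s : ℝ => s ^ Q) (Icc ls 1) :=
      ContinuousOn.rpow_const continuousOn_id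
        (fun x hx => Or.inl (ne_of_gt (lt_of_lt_of_le hls_pos hx.1)))
    exact ((((continuousOn_id.pow 2).mul continuousOn_const).add continuousOn_const).sub
      (continuousOn_id.mul continuousOn_const)).sub (c1.mul continuousOn_const)
  have hk1 : k 1 < 0 := by
    have : k 1 = G + L - Γ - b := by
      simp only [hk_def, Real.one_rpow, one_pow, one_mul]
    rw [this]; linarith
  have hks : 0 < k ls := by
    have hrp : ls ^ Q ≤ ls := by
      have := Real.rpow_le_rpow_of_exponent_ge hls_pos hls_le1 (show (1:ℝ) ≤ Q by linarith)
      rwa [Real.rpow_one] at this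
    have m1 : ls ^ Q * b ≤ ls * b := mul_le_mul_of_nonneg_right hrp hb0
    have m2 : 0 ≤ ls ^ 2 * G := mul_nonneg (sq_nonneg _) hG
    have hsb : ls * (2 * (Γ + b + 1)) ≤ L := by
      rw [← le_div_iff₀ hden]; exact min_le_right _ _
    show 0 < ls ^ 2 * G + L - ls * Γ - ls ^ Q * b
    linarith [m1, m2, hsb, hls_pos]
  obtain ⟨lam, hlam_mem, hklam⟩ :=
    intermediate_value_Icc' hls_le1 hcont (Set.mem_Icc.2 ⟨hk1.le, hks.le⟩)
  have hlam0 : 0 < lam := lt_of_lt_of_le hls_pos hlam_mem.1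
  have hlam1 : lam < 1 := lt_of_le_of_ne hlam_mem.2 (fun h => by
    rw [h] at hklam; linarith)
  -- scaled function
  set w : ℝ → ℂ := scale lam v with hw_def
  have hwH1 : MemH1 w := stmt9aux_memH1_scale lam hlam0 v hv
  have hwne : w ≠ 0 := stmt9aux_scale_ne_zero lam hlam0 v hv0
  have hgw : gradSq w = lam ^ 2 * G := stmt9aux_gradSq_scale lam hlam0 v
  have hlw : l2Sq w = l2 := stmt9aux_l2Sq_scale lam hlam0 v
  have hnw : ‖w 0‖ ^ 2 = lam * n0 := stmt9aux_norm_scale_zero_sq lam hlam0 v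
  have hpw : lpPow p w = lam ^ Q * b := stmt9aux_lpPow_scale p lam hp0 hlam0 v
  have hklam' : lam ^ 2 * G + L - lam * Γ - lam ^ Q * b = 0 := by
    have h := hklam
    rw [hk_def] at h
    exact h
  have hKw : Kfun γ p ω w = 0 := by
    unfold Kfun
    rw [hgw, hlw, hnw, hpw]
    linear_combination hklam'
  have hbern : (p - 3) / 2 * lam ^ 2 - (p - 5) / 2 * lam ≤ lam ^ Q := by
    have h := stmt9aux_bern Q lam hQ hlam0 hlam1.le
    calc (p - 3) / 2 * lam ^ 2 - (p - 5) / 2 * lam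
        = (Q - 1) * lam ^ 2 - (Q - 2) * lam := by rw [hQ_def]; ring
      _ ≤ lam ^ Q := h
  have hcore := stmt9aux_core p G Γ b lam (lam ^ Q) hp hΓ hP2 hE2 hlam0.le hlam1 hbern
  have hSw : Sfun γ p ω w < Sfun γ p ω v := by
    unfold Sfun En
    rw [hgw, hlw, hnw, hpw]
    have e4 : γ / 2 * (lam * n0) = lam * Γ / 2 := by rw [hΓ_def]; ring
    have e5 : γ / 2 * n0 = Γ / 2 := by rw [hΓ_def]; ring
    rw [e4, e5]
    have : lam ^ 2 * G / 2 - lam * Γ / 2 - lam ^ Q * b / (p + 1)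
        < G / 2 - Γ / 2 - b / (p + 1) := by
      calc lam ^ 2 * G / 2 - lam * Γ / 2 - lam ^ Q * b / (p + 1)
          = lam ^ 2 * G / 2 - lam * Γ / 2 - (lam ^ Q) * b / (p + 1) := by ring
        _ < G / 2 - Γ / 2 - b / (p + 1) := hcore
    linarith
  have hbdd : BddBelow {s : ℝ | ∃ u : ℝ → ℂ, MemH1 u ∧ u ≠ 0 ∧ Kfun γ p ω u = 0
      ∧ s = Sfun γ p ω u} := by
    refine ⟨0, fun s hs => ?_⟩
    obtain ⟨u, _, _, hKu, rfl⟩ := hs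
    unfold Kfun at hKu
    have hbu : 0 ≤ lpPow p u := stmt9aux_lpPow_nonneg p u
    have hne : p + 1 ≠ 0 := hp1.ne'
    have e : (2 * (p + 1)) * Sfun γ p ω u = (p - 1) * lpPow p u
        + (p + 1) * (gradSq u + ω * l2Sq u - γ * ‖u 0‖ ^ 2 - lpPow p u) := by
      unfold Sfun En
      field_simp
      ring
    rw [hKu, mul_zero, add_zero] at e
    have h1 : 0 ≤ (2 * (p + 1)) * Sfun γ p ω u := by
      rw [e]; exact mul_nonneg (by linarith) hbu
    by_contra hcon
    push_neg at hcon
    have h2 : (2 * (p + 1)) * Sfun γ p ω u < 0 :=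
      mul_neg_of_pos_of_neg (by linarith) hcon
    linarith
  have hmem : Sfun γ p ω w ∈ {s : ℝ | ∃ u : ℝ → ℂ, MemH1 u ∧ u ≠ 0 ∧ Kfun γ p ω u = 0
      ∧ s = Sfun γ p ω u} := ⟨w, hwH1, hwne, hKw, rfl⟩
  calc dInf γ p ω ≤ Sfun γ p ω w := csInf_le hbdd hmem
    _ < Sfun γ p ω v := hSw
end
end
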